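/- arXiv:2006.10247 — 3 statements merged into one kernel-verified Lean document; each statement's English description precedes it below -/
import Mathlib

section
/- Let π and ι be permutations of {1,…,n} of type (k,n) with ι ≤_∘ π, and let f, i ∈ Bound(k,n) be their lifts. Then i⁻¹·f·i ∈ Bound(k,n); consequently i⁻¹·f·i is the lift of the permutation μ = ι⁻¹πι, which has type (k,n). -/
open Finset

/-- `f` is an affine permutation of period `n`: an `n`-periodic bijection of `ℤ`. -/
def IsAffinePerm (n : ℕ) (f : Equiv.Perm ℤ) : Prop :=
  ∀ a : ℤ, f (a + n) = f a + n

/-- The length of an affine permutation of period `n`: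
the number of pairs `(i, j)` with `i ∈ {1,…,n}`, `j ∈ ℤ`, `i < j` and `f i > f j`. -/
noncomputable def aLen (n : ℕ) (f : Equiv.Perm ℤ) : ℕ :=
  Set.ncard {p : ℤ × ℤ | 1 ≤ p.1 ∧ p.1 ≤ (n : ℤ) ∧ p.1 < p.2 ∧ f p.2 < f p.1}

/-- `t` is the affine transposition `t_{a,b}` (period `n`): it swaps `a + jn` and `b + jn`
for all `j : ℤ` and fixes everything else; requires `a ≢ b (mod n)`. -/
def IsAffTranspAt (n : ℕ) (a b : ℤ) (t : Equiv.Perm ℤ) : Prop :=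
  ¬ ((n : ℤ) ∣ b - a) ∧
    ∀ x : ℤ,
      ((n : ℤ) ∣ x - a → t x = x - a + b) ∧
      ((n : ℤ) ∣ x - b → t x = x - b + a) ∧
      (¬ (n : ℤ) ∣ x - a → ¬ (n : ℤ) ∣ x - b → t x = x)

/-- `t` is an affine transposition of period `n`. -/
def IsAffTransp (n : ℕ) (t : Equiv.Perm ℤ) : Prop :=
  ∃ a b : ℤ, IsAffTranspAt n a b t

/-- The right associated reflections `T_R(f)`: affine transpositions `t` with `ℓ(f t) < ℓ(f)`. -/
def TR (n : ℕ) (f : Equiv.Perm ℤ) : Set (Equiv.Perm ℤ) :=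
  {t | IsAffTransp n t ∧ aLen n (f * t) < aLen n f}

/-- The left associated reflections `T_L(f)`: affine transpositions `t` with `ℓ(t f) < ℓ(f)`. -/
def TL (n : ℕ) (f : Equiv.Perm ℤ) : Set (Equiv.Perm ℤ) :=
  {t | IsAffTransp n t ∧ aLen n (t * f) < aLen n f}

/-- `u ≤_R f`: the factorization `f = u · (u⁻¹ f)` is length-additive. -/
def LeR (n : ℕ) (u f : Equiv.Perm ℤ) : Prop :=
  aLen n f = aLen n u + aLen n (u⁻¹ * f)

/-- `Bound k n`: bounded affine permutations, `a < f a ≤ a + n` with average shift `k`. -/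
def Bound (k n : ℕ) : Set (Equiv.Perm ℤ) :=
  {f | IsAffinePerm n f ∧ (∀ a : ℤ, a < f a ∧ f a ≤ a + n) ∧
    (∑ a ∈ Finset.Icc (1 : ℤ) (n : ℤ), (f a - a)) = (k : ℤ) * n}

/-- A permutation of `{1,…,n}` (modelled on `Fin n`) has type `(k,n)`:
`#{a : a ≤ π⁻¹ a} = k`. -/
def IsType (k n : ℕ) (π : Equiv.Perm (Fin n)) : Prop :=
  (Finset.univ.filter (fun a : Fin n => a ≤ π⁻¹ a)).card = k

/-- `f` is the lift of `π` : the affine permutation with `f a = π a` if `π a > a`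
and `f a = π a + n` otherwise (identifying `v : Fin n` with the integer `v + 1 ∈ {1,…,n}`). -/
def IsLift (n : ℕ) (π : Equiv.Perm (Fin n)) (f : Equiv.Perm ℤ) : Prop :=
  IsAffinePerm n f ∧ ∀ a : Fin n,
    f ((a.val : ℤ) + 1) =
      if (a.val : ℤ) < ((π a).val : ℤ) then ((π a).val : ℤ) + 1
      else ((π a).val : ℤ) + 1 + n

/-- The position of `a` in the cyclic (linear) order `<_i` on `Fin n` starting at `i`. -/
def cPos (n : ℕ) [NeZero n] (i a : Fin n) : ℕ := (a - i).val

/-- `a, b, c, d` is a cyclically ordered quadruple. -/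
def CyclicOrdered (n : ℕ) [NeZero n] (a b c d : Fin n) : Prop :=
  0 < cPos n a b ∧ cPos n a b < cPos n a c ∧ cPos n a c < cPos n a d

/-- Two subsets `I, J` of `Fin n` are weakly separated. -/
def WeaklySeparated (n : ℕ) [NeZero n] (I J : Finset (Fin n)) : Prop :=
  ¬ ∃ a b c d : Fin n, CyclicOrdered n a b c d ∧
      a ∈ I ∧ a ∉ J ∧ c ∈ I ∧ c ∉ J ∧ b ∈ J ∧ b ∉ I ∧ d ∈ J ∧ d ∉ I

/-- `(I_1,…,I_n)` (indexed by `Fin n`, cyclically) is a Grassmannlike necklace of type `(k,n)`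
with removal permutation `ρ` and insertion permutation `ι`. -/
def IsGrassNecklace (n k : ℕ) [NeZero n] (I : Fin n → Finset (Fin n))
    (ρ ι : Equiv.Perm (Fin n)) : Prop :=
  (∀ a : Fin n, (I a).card = k) ∧
    ∀ a : Fin n, ρ a ∈ I a ∧ I (a + 1) = insert (ι a) ((I a).erase (ρ a))

open Fin.NatCast in
/-- Auxiliary construction of the Grassmannlike necklace with removal `ρ` and insertion `ι`. -/
def neckAux (n : ℕ) [NeZero n] (ρ ι : Equiv.Perm (Fin n)) : ℕ → Finset (Fin n)
  | 0 => Finset.univ.filter (fun a : Fin n => ρ⁻¹ a ≤ ι⁻¹ a)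
  | m + 1 => insert (ι (m : Fin n)) ((neckAux n ρ ι m).erase (ρ (m : Fin n)))

/-- The Grassmannlike necklace with removal permutation `ρ` and insertion permutation `ι`:
its first term is `{a : ρ⁻¹ a ≤ ι⁻¹ a}` and `I_{a+1} = (I_a ∖ {ρ a}) ∪ {ι a}`.
The forward Grassmann necklace of `π` is `necklace n 1 π`; the reverse Grassmann
necklace of `π` is `necklace n π⁻¹ 1`. -/
def necklace (n : ℕ) [NeZero n] (ρ ι : Equiv.Perm (Fin n)) (j : Fin n) : Finset (Fin n) :=
  neckAux n ρ ι j.val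

/-- The sorted list of positions (in the order `<_i`) of the elements of `S`. -/
def sortedShift (n : ℕ) [NeZero n] (i : Fin n) (S : Finset (Fin n)) : List ℕ :=
  (S.image (fun a => cPos n i a)).sort (· ≤ ·)

/-- `S ≤_i T` componentwise on `<_i`-sorted lists. -/
def leCyc (n : ℕ) [NeZero n] (i : Fin n) (S T : Finset (Fin n)) : Prop :=
  List.Forall₂ (· ≤ ·) (sortedShift n i S) (sortedShift n i T)

/-- The positroid `𝓜_π` of `π` (via Oh's theorem, taken as the definition). -/
def positroid (k n : ℕ) [NeZero n] (π : Equiv.Perm (Fin n)) : Set (Finset (Fin n)) :=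
  {S | S.card = k ∧ ∀ j : Fin n, leCyc n j (necklace n 1 π j) S}

/-- `v` lies strictly inside the arc from `w` clockwise to `x`. -/
def InArc (n : ℕ) [NeZero n] (w v x : Fin n) : Prop :=
  0 < cPos n w v ∧ cPos n w v < cPos n w x

/-- The chords `w ↦ x` and `y ↦ z` are noncrossing: they do not intersect,
including at boundary vertices. -/
def Noncrossing (n : ℕ) [NeZero n] (w x y z : Fin n) : Prop :=
  w ≠ y ∧ w ≠ z ∧ x ≠ y ∧ x ≠ z ∧
    ¬ ((InArc n w y x ∧ InArc n x z w) ∨ (InArc n w z x ∧ InArc n x y w))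

/-- The (distinct) chords `w ↦ x` and `y ↦ z` are crossing. -/
def Crossing (n : ℕ) [NeZero n] (w x y z : Fin n) : Prop :=
  (w ≠ y ∨ x ≠ z) ∧ ¬ Noncrossing n w x y z

/-- The noncrossing chords `w ↦ x` and `y ↦ z` are aligned:
`w <_w y <_w z <_w x`, or `w <_w x <_w z <_w y`, or `w = x` and `w <_w y <_w z`. -/
def Aligned (n : ℕ) [NeZero n] (w x y z : Fin n) : Prop :=
  Noncrossing n w x y z ∧
    ((0 < cPos n w y ∧ cPos n w y < cPos n w z ∧ cPos n w z < cPos n w x) ∨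
     (0 < cPos n w x ∧ cPos n w x < cPos n w z ∧ cPos n w z < cPos n w y) ∨
     (w = x ∧ 0 < cPos n w y ∧ cPos n w y < cPos n w z))

/-- A noncrossing toggle relating two Grassmannlike necklaces, each encoded by its pair
(removal permutation, insertion permutation): at some position `p`, the toggle is defined
(`ρ(p-1) ≠ ι(p)` and `ρ(p) ≠ ι(p-1)`), the chords `ρ(p-1) ↦ ι(p-1)` and `ρ(p) ↦ ι(p)`
are noncrossing, and the new permutations are obtained by right multiplication by the
transposition of positions `p-1, p`. -/
def NoncrossingToggle (n : ℕ) [NeZero n]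
    (N N' : Equiv.Perm (Fin n) × Equiv.Perm (Fin n)) : Prop :=
  ∃ p : Fin n,
    N.1 (p - 1) ≠ N.2 p ∧ N.1 p ≠ N.2 (p - 1) ∧
    Noncrossing n (N.1 (p - 1)) (N.2 (p - 1)) (N.1 p) (N.2 p) ∧
    N'.1 = N.1 * Equiv.swap (p - 1) p ∧ N'.2 = N.2 * Equiv.swap (p - 1) p

/-- The Plücker coordinate `Δ_I(M)`: the determinant of the `k × k` submatrix of `M`
on the columns indexed by `I` (in increasing order); junk value `0` if `I.card ≠ k`. -/
noncomputable def plucker (k n : ℕ) (M : Matrix (Fin k) (Fin n) ℂ) (I : Finset (Fin n)) : ℂ :=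
  if h : I.card = k then
    Matrix.det (Matrix.of (fun r c : Fin k => M r ((I.orderIsoOfFin h) c).1))
  else 0

/-- The matrix cone `Π°_π` over the open positroid variety of `π`: full-rank `k × n`
matrices with `Δ_J = 0` for `J ∉ 𝓜_π` and nonvanishing forward-necklace Plücker coordinates. -/
def openPos (k n : ℕ) [NeZero n] (π : Equiv.Perm (Fin n)) : Set (Matrix (Fin k) (Fin n) ℂ) :=
  {M | M.rank = k ∧
    (∀ J : Finset (Fin n), J.card = k → J ∉ positroid k n π → plucker k n M J = 0) ∧
    (∀ j : Fin n, plucker k n M (necklace n 1 π j) ≠ 0)}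

/-- `N` is the right twist of `M` along the necklace `I` with removal permutation `ρ`:
for all `a` and all `b ∈ I a`, `⟨N_a, M_b⟩ = δ_{b, ρ a}`. -/
def IsRightTwist (k n : ℕ) (I : Fin n → Finset (Fin n)) (ρ : Equiv.Perm (Fin n))
    (M N : Matrix (Fin k) (Fin n) ℂ) : Prop :=
  ∀ a : Fin n, ∀ b ∈ I a, (∑ j : Fin k, N j a * M j b) = if b = ρ a then 1 else 0

/-- `N` is the left twist of `M` along the necklace `I` with insertion permutation `ι`:
for all `a` and all `b ∈ I (a+1)`, `⟨N_a, M_b⟩ = δ_{b, ι a}`. -/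
def IsLeftTwist (k n : ℕ) [NeZero n] (I : Fin n → Finset (Fin n)) (ι : Equiv.Perm (Fin n))
    (M N : Matrix (Fin k) (Fin n) ℂ) : Prop :=
  ∀ a : Fin n, ∀ b ∈ I (a + 1), (∑ j : Fin k, N j a * M j b) = if b = ι a then 1 else 0

theorem Equiv.Perm.apply_inv_self {α : Type*} (f : Equiv.Perm α) (x : α) : f (f⁻¹ x) = x :=
  f.apply_symm_apply x

theorem Equiv.Perm.inv_apply_self {α : Type*} (f : Equiv.Perm α) (x : α) : f⁻¹ (f x) = x :=
  f.symm_apply_apply x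

namespace AffAux

variable {n : ℕ}

lemma aff_shift {f : Equiv.Perm ℤ} (hf : IsAffinePerm n f) (x t : ℤ) :
    f (x + n * t) = f x + n * t := by
  induction t using Int.induction_on with
  | zero => simp
  | succ k ih =>
      have h1 : x + (n : ℤ) * (k + 1) = (x + n * k) + n := by ring
      rw [h1, hf, ih]; ring
  | pred k ih =>
      have h1 : (x + (n:ℤ) * (-k - 1)) + n = x + n * (-k) := by ring
      have := hf (x + (n:ℤ) * (-k - 1))
      rw [h1, ih] at this
      omega

lemma aff_inv {f : Equiv.Perm ℤ} (hf : IsAffinePerm n f) : IsAffinePerm n f⁻¹ := by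
  intro a
  apply f.injective
  rw [Equiv.Perm.apply_inv_self]
  have : f (f⁻¹ a + n) = f (f⁻¹ a) + n := hf _
  rw [this, Equiv.Perm.apply_inv_self]

lemma aff_mul {f g : Equiv.Perm ℤ} (hf : IsAffinePerm n f) (hg : IsAffinePerm n g) :
    IsAffinePerm n (f * g) := by
  intro a
  simp only [Equiv.Perm.mul_apply, hg a, hf (g a)]

lemma aff_dvd_inj {f : Equiv.Perm ℤ} (hf : IsAffinePerm n f) {x y : ℤ}
    (h : (n : ℤ) ∣ f x - f y) : (n : ℤ) ∣ x - y := by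
  obtain ⟨t, ht⟩ := h
  have : f (y + n * t) = f x := by rw [aff_shift hf]; omega
  have hxy : x = y + n * t := f.injective this.symm
  exact ⟨t, by omega⟩

/-- normal form in [1, n] -/
def nrm (n : ℕ) (x : ℤ) : ℤ := (x - 1) % n + 1

lemma nrm_lb (hn : 0 < n) (x : ℤ) : 1 ≤ nrm n x := by
  have := Int.emod_nonneg (x - 1) (by exact_mod_cast hn.ne' : (n:ℤ) ≠ 0)
  unfold nrm; omega

lemma nrm_ub (hn : 0 < n) (x : ℤ) : nrm n x ≤ n := by
  have := Int.emod_lt_of_pos (x - 1) (by exact_mod_cast hn : (0:ℤ) < n)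
  unfold nrm; omega

lemma nrm_dvd (x : ℤ) : (n : ℤ) ∣ x - nrm n x := by
  have := Int.emod_def (x - 1) (n : ℤ)
  refine ⟨(x - 1) / n, ?_⟩
  unfold nrm; omega

lemma unique_rep (hn : 0 < n) {x y c : ℤ} (hd : (n : ℤ) ∣ x - y)
    (hx1 : c < x) (hx2 : x ≤ c + n) (hy1 : c < y) (hy2 : y ≤ c + n) : x = y := by
  obtain ⟨t, ht⟩ := hd
  have hnpos : (0:ℤ) < n := by exact_mod_cast hn
  have h1 : (n:ℤ) * t < n * 1 := by rw [← ht] at *; omega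
  have h2 : (n:ℤ) * (-1) < n * t := by
    have : -(n:ℤ) < x - y := by omega
    rw [ht] at this; omega
  have ht1 : t < 1 := lt_of_mul_lt_mul_left h1 hnpos.le
  have ht2 : -1 < t := lt_of_mul_lt_mul_left h2 hnpos.le
  have : t = 0 := by omega
  rw [this, mul_zero] at ht; omega

lemma nrm_fix (hn : 0 < n) {a : ℤ} (h1 : 1 ≤ a) (h2 : a ≤ n) (x : ℤ)
    (hd : (n : ℤ) ∣ x - a) : nrm n x = a := by
  have h3 : (n:ℤ) ∣ nrm n x - a := by
    have h := dvd_sub hd (nrm_dvd (n := n) x)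
    rwa [show x - a - (x - nrm n x) = nrm n x - a by ring] at h
  refine unique_rep hn (c := 0) h3 ?_ ?_ ?_ ?_ <;>
    [skip; skip; omega; omega]
  · have := nrm_lb hn x; omega
  · have := nrm_ub hn x; omega


lemma inv_finite (hn : 0 < n) {w : Equiv.Perm ℤ}
    (hlo : ∀ x : ℤ, x - n < w x) (hhi : ∀ x : ℤ, w x ≤ x + n) :
    {p : ℤ × ℤ | 1 ≤ p.1 ∧ p.1 ≤ (n : ℤ) ∧ p.1 < p.2 ∧ w p.2 < w p.1}.Finite := by
  apply Set.Finite.subset ((Set.finite_Icc (1:ℤ) n).prod (Set.finite_Icc (1:ℤ) (3*n)))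
  rintro ⟨a, b⟩ ⟨h1, h2, h3, h4⟩
  have hb1 := hlo b
  have hb2 := hhi a
  have h4' : w b < w a := h4
  simp only [Set.mem_prod, Set.mem_Icc]
  constructor
  · exact ⟨h1, h2⟩
  · constructor
    · omega
    · omega


lemma no_cancel (hn : 0 < n) {f i : Equiv.Perm ℤ}
    (haf : IsAffinePerm n f) (hai : IsAffinePerm n i)
    (hbf : ∀ a : ℤ, a < f a ∧ f a ≤ a + n) (hbi : ∀ a : ℤ, a < i a ∧ i a ≤ a + n)
    (hle : aLen n f = aLen n i + aLen n (i⁻¹ * f)) :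
    ∀ a b : ℤ, a < b → (i⁻¹ * f) b < (i⁻¹ * f) a → f b < f a := by
  set h : Equiv.Perm ℤ := i⁻¹ * f with hh
  have hah : IsAffinePerm n h := aff_mul (aff_inv hai) haf
  have hih : ∀ x : ℤ, i (h x) = f x := by
    intro x; simp [hh, Equiv.Perm.mul_apply]
  have hinvlo : ∀ y : ℤ, y - n ≤ i⁻¹ y := by
    intro y
    have h2 := (hbi (i⁻¹ y)).2
    rw [Equiv.Perm.apply_inv_self] at h2; omega
  have hinvhi : ∀ y : ℤ, i⁻¹ y < y := by
    intro y
    have h1 := (hbi (i⁻¹ y)).1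
    rwa [Equiv.Perm.apply_inv_self] at h1
  have hlo_h : ∀ x : ℤ, x - n < h x := by
    intro x
    have := hinvlo (f x)
    have := (hbf x).1
    simp only [hh, Equiv.Perm.mul_apply]; omega
  have hhi_h : ∀ x : ℤ, h x ≤ x + n := by
    intro x
    have := hinvhi (f x)
    have := (hbf x).2
    simp only [hh, Equiv.Perm.mul_apply]; omega
  intro a0 b0 hab hH
  by_contra hc
  push_neg at hc
  have hfab : f a0 < f b0 :=
    lt_of_le_of_ne hc (fun e => absurd (f.injective e) (by omega))
  -- normalize the witness pair into the window
  obtain ⟨t, ht⟩ := nrm_dvd (n := n) a0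
  have hmt : (n:ℤ) * (-t) = -((n:ℤ) * t) := by ring
  set a1 : ℤ := a0 + n * (-t) with ha1
  set b1 : ℤ := b0 + n * (-t) with hb1
  have ha1n : a1 = nrm n a0 := by omega
  have ha1l : 1 ≤ a1 := by rw [ha1n]; exact nrm_lb hn a0
  have ha1u : a1 ≤ n := by rw [ha1n]; exact nrm_ub hn a0
  have hab1 : a1 < b1 := by omega
  have hH1 : h b1 < h a1 := by
    rw [ha1, hb1, aff_shift hah, aff_shift hah]; omega
  have hf1 : f a1 < f b1 := by
    rw [ha1, hb1, aff_shift haf, aff_shift haf]; omega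
  -- the three inversion sets
  set Sf : Set (ℤ × ℤ) := {p | 1 ≤ p.1 ∧ p.1 ≤ (n : ℤ) ∧ p.1 < p.2 ∧ f p.2 < f p.1} with hSf
  set Si : Set (ℤ × ℤ) := {p | 1 ≤ p.1 ∧ p.1 ≤ (n : ℤ) ∧ p.1 < p.2 ∧ i p.2 < i p.1} with hSi
  set Sh : Set (ℤ × ℤ) := {p | 1 ≤ p.1 ∧ p.1 ≤ (n : ℤ) ∧ p.1 < p.2 ∧ h p.2 < h p.1} with hSh
  have hFf : Sf.Finite := inv_finite hn (fun x => by have := (hbf x).1; omega) (fun x => (hbf x).2)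
  have hFi : Si.Finite := inv_finite hn (fun x => by have := (hbi x).1; omega) (fun x => (hbi x).2)
  have hFh : Sh.Finite := inv_finite hn hlo_h hhi_h
  -- the injection
  set Φ : ℤ × ℤ → (ℤ × ℤ) × Bool := fun p =>
    if h p.2 < h p.1 then (p, true)
    else ((nrm n (h p.1), h p.2 + (nrm n (h p.1) - h p.1)), false) with hΦ
  set T : Set ((ℤ × ℤ) × Bool) := ((fun q => (q, true)) '' Sh) ∪ ((fun q => (q, false)) '' Si)
    with hT
  have hTfin : T.Finite := (hFh.image _).union (hFi.image _)
  have hmaps : ∀ p ∈ insert (a1, b1) Sf, Φ p ∈ T := by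
    rintro ⟨a, b⟩ hp
    rcases Set.mem_insert_iff.mp hp with heq | hmem
    · rw [heq]
      have hrw : Φ (a1, b1) = ((a1, b1), true) := by simp [hΦ, hH1]
      rw [hrw]
      exact Set.mem_union_left _ ⟨(a1, b1), ⟨ha1l, ha1u, hab1, hH1⟩, rfl⟩
    · obtain ⟨p1, p2, p3, p4⟩ := hmem
      have p3' : a < b := p3
      have p4' : f b < f a := p4
      by_cases hcase : h b < h a
      · have hrw : Φ (a, b) = ((a, b), true) := by simp [hΦ, hcase]
        rw [hrw]
        exact Set.mem_union_left _ ⟨(a, b), ⟨p1, p2, p3, hcase⟩, rfl⟩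
      · have hne : h a ≠ h b := fun e => absurd (h.injective e) (by omega)
        have hlt : h a < h b := lt_of_le_of_ne (not_lt.mp hcase) hne
        have hrw : Φ (a, b) = ((nrm n (h a), h b + (nrm n (h a) - h a)), false) := by
          simp [hΦ, hcase]
        rw [hrw]
        obtain ⟨u0, hu0⟩ := nrm_dvd (n := n) (h a)
        have hmu : (n:ℤ) * (-u0) = -((n:ℤ) * u0) := by ring
        have e1 : i (nrm n (h a)) = f a + n * (-u0) := by
          rw [show nrm n (h a) = h a + n * (-u0) by omega, aff_shift hai, hih]
        have e2 : i (h b + (nrm n (h a) - h a)) = f b + n * (-u0) := by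
          rw [show h b + (nrm n (h a) - h a) = h b + n * (-u0) by omega, aff_shift hai, hih]
        have hord : i (h b + (nrm n (h a) - h a)) < i (nrm n (h a)) := by
          rw [e1, e2]; omega
        have hcd : nrm n (h a) < h b + (nrm n (h a) - h a) := by omega
        exact Set.mem_union_right _
          ⟨(nrm n (h a), h b + (nrm n (h a) - h a)), ⟨nrm_lb hn _, nrm_ub hn _, hcd, hord⟩, rfl⟩
  have hinj : Set.InjOn Φ (insert (a1, b1) Sf) := by
    rintro ⟨a, b⟩ hp ⟨a', b'⟩ hq heq
    have hwin : 1 ≤ a ∧ a ≤ (n : ℤ) := by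
      rcases Set.mem_insert_iff.mp hp with h' | h'
      · have : a = a1 := congrArg Prod.fst h'; omega
      · exact ⟨h'.1, h'.2.1⟩
    have hwin' : 1 ≤ a' ∧ a' ≤ (n : ℤ) := by
      rcases Set.mem_insert_iff.mp hq with h' | h'
      · have : a' = a1 := congrArg Prod.fst h'; omega
      · exact ⟨h'.1, h'.2.1⟩
    by_cases h1 : h b < h a <;> by_cases h2 : h b' < h a' <;>
      simp only [hΦ, h1, h2, if_pos, if_neg, if_true, if_false, ite_true, ite_false,
        Prod.mk.injEq] at heq
    · exact Prod.ext (by tauto) (by tauto)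
    · exact absurd heq.2 (by simp)
    · exact absurd heq.2 (by simp)
    · obtain ⟨⟨e1, e2⟩, _⟩ := heq
      have hdvd : (n : ℤ) ∣ h a - h a' := by
        obtain ⟨u1, hu1⟩ := nrm_dvd (n := n) (h a)
        obtain ⟨u2, hu2⟩ := nrm_dvd (n := n) (h a')
        exact ⟨u1 - u2, by rw [mul_sub]; omega⟩
      have hdvd2 : (n : ℤ) ∣ a - a' := aff_dvd_inj hah hdvd
      have haa : a = a' := unique_rep hn (c := 0) hdvd2 (by omega) (by omega) (by omega) (by omega)
      subst haa
      have : h b = h b' := by omega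
      have : b = b' := h.injective this
      exact Prod.ext rfl this
  have hnm : (a1, b1) ∉ Sf := by
    rintro ⟨_, _, _, h4⟩
    have : f b1 < f a1 := h4
    omega
  have hS : (insert (a1, b1) Sf).ncard = Sf.ncard + 1 :=
    Set.ncard_insert_of_notMem hnm hFf
  have hdisj : Disjoint ((fun q : ℤ × ℤ => (q, true)) '' Sh) ((fun q : ℤ × ℤ => (q, false)) '' Si) := by
    rw [Set.disjoint_left]
    rintro x ⟨q, _, rfl⟩ ⟨q', _, hx⟩
    exact absurd (congrArg Prod.snd hx) (by simp)
  have hTcard : T.ncard = Sh.ncard + Si.ncard := by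
    rw [hT, Set.ncard_union_eq hdisj (hFh.image _) (hFi.image _),
      Set.ncard_image_of_injective _ (fun x y hxy => by simpa using congrArg Prod.fst hxy),
      Set.ncard_image_of_injective _ (fun x y hxy => by simpa using congrArg Prod.fst hxy)]
  have hle2 : (insert (a1, b1) Sf).ncard ≤ T.ncard :=
    Set.ncard_le_ncard_of_injOn Φ hmaps hinj hTfin
  have hLf : aLen n f = Sf.ncard := rfl
  have hLi : aLen n i = Si.ncard := rfl
  have hLh : aLen n h = Sh.ncard := rfl
  rw [hLf, hLi, hLh] at hle
  omega


lemma star_inv (hn : 0 < n) {f i : Equiv.Perm ℤ}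
    (haf : IsAffinePerm n f) (hai : IsAffinePerm n i)
    (hbf : ∀ a : ℤ, a < f a ∧ f a ≤ a + n) (hbi : ∀ a : ℤ, a < i a ∧ i a ≤ a + n)
    (hle : aLen n f = aLen n i + aLen n (i⁻¹ * f)) :
    ∀ x y : ℤ, x < y → i⁻¹ y < i⁻¹ x → f⁻¹ y < f⁻¹ x := by
  intro x y hxy hiy
  by_contra hc
  push_neg at hc
  have hab : f⁻¹ x < f⁻¹ y :=
    lt_of_le_of_ne hc (fun e => absurd (f⁻¹.injective e) (by omega))
  have key := no_cancel hn haf hai hbf hbi hle (f⁻¹ x) (f⁻¹ y) hab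
    (by simp only [Equiv.Perm.mul_apply, Equiv.Perm.apply_inv_self]; exact hiy)
  rw [Equiv.Perm.apply_inv_self, Equiv.Perm.apply_inv_self] at key
  omega

lemma conj_bounds (hn : 0 < n) {f i : Equiv.Perm ℤ}
    (haf : IsAffinePerm n f) (hai : IsAffinePerm n i)
    (hbf : ∀ a : ℤ, a < f a ∧ f a ≤ a + n) (hbi : ∀ a : ℤ, a < i a ∧ i a ≤ a + n)
    (hle : aLen n f = aLen n i + aLen n (i⁻¹ * f)) :
    ∀ a : ℤ, a < (i⁻¹ * f * i) a ∧ (i⁻¹ * f * i) a ≤ a + n := by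
  have hstar := star_inv hn haf hai hbf hbi hle
  have hfinvlt : ∀ y : ℤ, f⁻¹ y < y := fun y => by
    have := (hbf (f⁻¹ y)).1; rwa [Equiv.Perm.apply_inv_self] at this
  have hfinvge : ∀ y : ℤ, y - n ≤ f⁻¹ y := fun y => by
    have := (hbf (f⁻¹ y)).2; rw [Equiv.Perm.apply_inv_self] at this; omega
  intro a
  have hg : (i⁻¹ * f * i) a = i⁻¹ (f (i a)) := rfl
  have hfi : f (i a) = i (i⁻¹ (f (i a))) := (Equiv.Perm.apply_inv_self i _).symm
  constructor
  · by_contra hc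
    push_neg at hc
    rw [hg] at hc
    set c : ℤ := i⁻¹ (f (i a)) with hcdef
    have h1 : i a < i c := by rw [← hfi]; exact (hbf (i a)).1
    have hca : c ≠ a := by
      intro e
      rw [e] at hfi
      have := (hbf (i a)).1
      omega
    have hclt : c < a := lt_of_le_of_ne hc hca
    have hst := hstar (i a) (i c) h1 (by
      rw [Equiv.Perm.inv_apply_self, Equiv.Perm.inv_apply_self]; exact hclt)
    have h2 : f⁻¹ (i c) = i a := by
      rw [← hfi, Equiv.Perm.inv_apply_self]
    rw [h2] at hst
    have := hfinvlt (i a)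
    omega
  · by_contra hc
    push_neg at hc
    rw [hg] at hc
    set c : ℤ := i⁻¹ (f (i a)) with hcdef
    have h1 : i c ≤ i (a + n) := by
      rw [← hfi, hai a]; have := (hbf (i a)).2; omega
    have h1' : i c < i (a + n) := by
      rcases lt_or_eq_of_le h1 with h | h
      · exact h
      · have := i.injective h; omega
    have hst := hstar (i c) (i (a + n)) h1' (by
      rw [Equiv.Perm.inv_apply_self, Equiv.Perm.inv_apply_self]; omega)
    have h2 : f⁻¹ (i c) = i a := by
      rw [← hfi, Equiv.Perm.inv_apply_self]
    rw [h2, hai a] at hst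
    have h3 : f⁻¹ (i a + n) = f⁻¹ (i a) + n := aff_inv haf (i a)
    have := hfinvge (i a)
    omega

lemma per_shift {φ : ℤ → ℤ} (hφ : ∀ x : ℤ, φ (x + n) = φ x) (x t : ℤ) :
    φ (x + n * t) = φ x := by
  induction t using Int.induction_on with
  | zero => simp
  | succ k ih =>
      have h1 : x + (n : ℤ) * (k + 1) = (x + n * k) + n := by ring
      rw [h1, hφ, ih]
  | pred k ih =>
      have h1 : (x + (n:ℤ) * (-k - 1)) + n = x + n * (-k) := by ring
      have h2 := hφ (x + (n:ℤ) * (-k - 1))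
      rw [h1, ih] at h2
      exact h2.symm

lemma per_sum (hn : 0 < n) {v : Equiv.Perm ℤ} (hav : IsAffinePerm n v) {φ : ℤ → ℤ}
    (hφ : ∀ x : ℤ, φ (x + n) = φ x) :
    ∑ a ∈ Finset.Icc (1:ℤ) (n:ℤ), φ (v a) = ∑ a ∈ Finset.Icc (1:ℤ) (n:ℤ), φ a := by
  have h1 : ∀ a : ℤ, φ (v a) = φ (nrm n (v a)) := by
    intro a
    obtain ⟨t, ht⟩ := nrm_dvd (n := n) (v a)
    have h2 : φ (nrm n (v a) + n * t) = φ (nrm n (v a)) := per_shift hφ _ t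
    rw [← h2]
    congr 1
    omega
  rw [Finset.sum_congr rfl (fun a _ => h1 a)]
  apply Finset.sum_nbij' (i := fun a => nrm n (v a)) (j := fun b => nrm n (v⁻¹ b))
  · intro a _
    rw [Finset.mem_Icc]
    exact ⟨nrm_lb hn _, nrm_ub hn _⟩
  · intro b _
    rw [Finset.mem_Icc]
    exact ⟨nrm_lb hn _, nrm_ub hn _⟩
  · intro a ha
    rw [Finset.mem_Icc] at ha
    obtain ⟨t, ht⟩ := nrm_dvd (n := n) (v a)
    have hmt : (n:ℤ) * (-t) = -((n:ℤ) * t) := by ring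
    have e : v⁻¹ (nrm n (v a)) = a + n * (-t) := by
      rw [show nrm n (v a) = v a + n * (-t) by omega, aff_shift (aff_inv hav),
        Equiv.Perm.inv_apply_self]
    rw [e]
    exact nrm_fix hn ha.1 ha.2 _ ⟨-t, by ring⟩
  · intro b hb
    rw [Finset.mem_Icc] at hb
    obtain ⟨t, ht⟩ := nrm_dvd (n := n) (v⁻¹ b)
    have hmt : (n:ℤ) * (-t) = -((n:ℤ) * t) := by ring
    have e : v (nrm n (v⁻¹ b)) = b + n * (-t) := by
      rw [show nrm n (v⁻¹ b) = v⁻¹ b + n * (-t) by omega, aff_shift hav,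
        Equiv.Perm.apply_inv_self]
    rw [e]
    exact nrm_fix hn hb.1 hb.2 _ ⟨-t, by ring⟩
  · intro a _
    rfl

lemma sum_Icc_eq_range (F : ℤ → ℤ) (m : ℕ) :
    ∑ x ∈ Finset.Icc (1:ℤ) (m:ℤ), F x = ∑ j ∈ Finset.range m, F ((j:ℤ)+1) := by
  induction m with
  | zero => simp
  | succ m ih =>
      have hins : Finset.Icc (1:ℤ) ((m:ℤ)+1) = insert ((m:ℤ)+1) (Finset.Icc (1:ℤ) (m:ℤ)) := by
        ext x
        simp only [Finset.mem_Icc, Finset.mem_insert]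
        omega
      have hc : ((m+1 : ℕ) : ℤ) = (m:ℤ) + 1 := by push_cast; ring
      rw [hc, hins, Finset.sum_insert (by simp), Finset.sum_range_succ, ih]
      ring

end AffAux

/-- If `ι ≤_∘ π` with lifts `i, f ∈ Bound(k,n)`, then `i⁻¹·f·i ∈ Bound(k,n)`
and is the lift of `μ = ι⁻¹πι`, which has type `(k,n)`. -/
theorem conjugate_lift_bounded
    (n k : ℕ) (π ι : Equiv.Perm (Fin n)) (f i : Equiv.Perm ℤ)
    (hπ : IsType k n π) (hι : IsType k n ι)
    (hf : IsLift n π f) (hfB : f ∈ Bound k n)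
    (hi : IsLift n ι i) (hiB : i ∈ Bound k n)
    (hle : LeR n i f) :
    i⁻¹ * f * i ∈ Bound k n ∧
    IsLift n (ι⁻¹ * π * ι) (i⁻¹ * f * i) ∧
    IsType k n (ι⁻¹ * π * ι) := by
  obtain ⟨haf, hbf, hsf⟩ := hfB
  obtain ⟨hai, hbi, hsi⟩ := hiB
  rcases Nat.eq_zero_or_pos n with h0 | hn
  · subst h0
    exfalso
    have h1 := (hbf 0).1
    have h2 := (hbf 0).2
    simp only [Nat.cast_zero] at h2
    omega
  have hle' : aLen n f = aLen n i + aLen n (i⁻¹ * f) := hle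
  have hag : IsAffinePerm n (i⁻¹ * f * i) :=
    AffAux.aff_mul (AffAux.aff_mul (AffAux.aff_inv hai) haf) hai
  have hbg : ∀ a : ℤ, a < (i⁻¹*f*i) a ∧ (i⁻¹*f*i) a ≤ a + n :=
    AffAux.conj_bounds hn haf hai hbf hbi hle'
  have hφi : ∀ x : ℤ, (i⁻¹ (x + n) - (x + n)) = i⁻¹ x - x := fun x => by
    rw [AffAux.aff_inv hai x]; ring
  have hφf : ∀ x : ℤ, (f (x + n) - (x + n)) = f x - x := fun x => by
    rw [haf x]; ring
  have key : ∑ a ∈ Finset.Icc (1:ℤ) (n:ℤ), ((i⁻¹*f*i) a - a)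
      = ∑ a ∈ Finset.Icc (1:ℤ) (n:ℤ), (f a - a) := by
    have t1 : ∑ a ∈ Finset.Icc (1:ℤ) (n:ℤ), ((i⁻¹*f*i) a - a)
        = ∑ a ∈ Finset.Icc (1:ℤ) (n:ℤ),
            ((i⁻¹ (f (i a)) - f (i a)) + ((f (i a) - i a) + (i a - a))) :=
      Finset.sum_congr rfl (fun a _ => by
        simp only [Equiv.Perm.mul_apply]; ring)
    rw [t1, Finset.sum_add_distrib, Finset.sum_add_distrib]
    have s1 : ∑ a ∈ Finset.Icc (1:ℤ) (n:ℤ), (i⁻¹ (f (i a)) - f (i a))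
        = ∑ a ∈ Finset.Icc (1:ℤ) (n:ℤ), (i⁻¹ a - a) := by
      have := AffAux.per_sum hn (AffAux.aff_mul haf hai) (φ := fun x => i⁻¹ x - x) hφi
      simpa only [Equiv.Perm.mul_apply] using this
    have s2 : ∑ a ∈ Finset.Icc (1:ℤ) (n:ℤ), (f (i a) - i a)
        = ∑ a ∈ Finset.Icc (1:ℤ) (n:ℤ), (f a - a) := by
      have := AffAux.per_sum hn hai (φ := fun x => f x - x) hφf
      simpa only using this
    have s3 : ∑ a ∈ Finset.Icc (1:ℤ) (n:ℤ), (a - i a)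
        = ∑ a ∈ Finset.Icc (1:ℤ) (n:ℤ), (i⁻¹ a - a) := by
      have h := AffAux.per_sum hn hai (φ := fun x => i⁻¹ x - x) hφi
      have h2 : ∑ a ∈ Finset.Icc (1:ℤ) (n:ℤ), (i⁻¹ (i a) - i a)
          = ∑ a ∈ Finset.Icc (1:ℤ) (n:ℤ), (a - i a) :=
        Finset.sum_congr rfl (fun a _ => by rw [Equiv.Perm.inv_apply_self])
      rw [← h2]
      simpa only using h
    have s4 : ∑ a ∈ Finset.Icc (1:ℤ) (n:ℤ), (a - i a)
        + ∑ a ∈ Finset.Icc (1:ℤ) (n:ℤ), (i a - a) = 0 := by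
      rw [← Finset.sum_add_distrib]
      exact Finset.sum_eq_zero (fun a _ => by ring)
    omega
  have hsg : ∑ a ∈ Finset.Icc (1:ℤ) (n:ℤ), ((i⁻¹*f*i) a - a) = (k:ℤ) * n := by
    rw [key]; exact hsf
  obtain ⟨hafL, hfval⟩ := hf
  obtain ⟨haiL, hival⟩ := hi
  have hcongf : ∀ b : Fin n, (n:ℤ) ∣ f ((b.val:ℤ)+1) - (((π b).val:ℤ)+1) := by
    intro b
    have h := hfval b
    by_cases hc : ((b.val:ℤ) < ((π b).val:ℤ))
    · rw [if_pos hc] at h; exact ⟨0, by rw [h]; ring⟩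
    · rw [if_neg hc] at h; exact ⟨1, by rw [h]; ring⟩
  have hcongi : ∀ b : Fin n, (n:ℤ) ∣ i ((b.val:ℤ)+1) - (((ι b).val:ℤ)+1) := by
    intro b
    have h := hival b
    by_cases hc : ((b.val:ℤ) < ((ι b).val:ℤ))
    · rw [if_pos hc] at h; exact ⟨0, by rw [h]; ring⟩
    · rw [if_neg hc] at h; exact ⟨1, by rw [h]; ring⟩
  have hconginv : ∀ (c : Fin n) (x : ℤ), (n:ℤ) ∣ x - ((c.val:ℤ)+1) →
      (n:ℤ) ∣ i⁻¹ x - (((ι⁻¹ c).val:ℤ)+1) := by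
    intro c x hx
    have h1 := hcongi (ι⁻¹ c)
    rw [Equiv.Perm.apply_inv_self] at h1
    apply AffAux.aff_dvd_inj hai
    rw [Equiv.Perm.apply_inv_self]
    obtain ⟨t1, ht1⟩ := hx
    obtain ⟨t2, ht2⟩ := h1
    exact ⟨t1 - t2, by rw [mul_sub]; omega⟩
  have hlift2 : ∀ a : Fin n,
      (i⁻¹ * f * i) ((a.val:ℤ) + 1) =
        if (a.val:ℤ) < (((ι⁻¹ * π * ι) a).val:ℤ) then (((ι⁻¹ * π * ι) a).val:ℤ) + 1
        else (((ι⁻¹ * π * ι) a).val:ℤ) + 1 + n := by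
    intro a
    set A : ℤ := (a.val:ℤ) + 1 with hA
    have hgA : (i⁻¹ * f * i) A = i⁻¹ (f (i A)) := rfl
    have hMu : ((ι⁻¹ * π * ι) a) = ι⁻¹ (π (ι a)) := rfl
    set B : ℤ := (((ι⁻¹ (π (ι a))).val:ℤ)) + 1 with hB
    have d1 : (n:ℤ) ∣ i A - (((ι a).val:ℤ)+1) := hcongi a
    have d2 : (n:ℤ) ∣ f (i A) - f (((ι a).val:ℤ)+1) := by
      obtain ⟨t, ht⟩ := d1
      refine ⟨t, ?_⟩
      rw [show i A = (((ι a).val:ℤ)+1) + n * t by omega, AffAux.aff_shift haf]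
      ring
    have d3 := hcongf (ι a)
    have d4 : (n:ℤ) ∣ f (i A) - (((π (ι a)).val:ℤ)+1) := by
      obtain ⟨t1, ht1⟩ := d2
      obtain ⟨t2, ht2⟩ := d3
      exact ⟨t1 + t2, by rw [mul_add]; omega⟩
    have d5 : (n:ℤ) ∣ i⁻¹ (f (i A)) - B := hconginv (π (ι a)) _ d4
    have hA1 : 1 ≤ A := by omega
    have hA2 : A ≤ (n:ℤ) := by have := a.isLt; omega
    have hB1 : 1 ≤ B := by omega
    have hB2 : B ≤ (n:ℤ) := by have := (ι⁻¹ (π (ι a))).isLt; omega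
    have hgb := hbg A
    rw [hMu]
    by_cases hAB : (a.val:ℤ) < ((ι⁻¹ (π (ι a))).val:ℤ)
    · rw [if_pos hAB, hgA]
      exact AffAux.unique_rep hn (c := A) d5 (by rw [← hgA]; exact hgb.1)
        (by rw [← hgA]; exact hgb.2) (by omega) (by omega)
    · rw [if_neg hAB, hgA]
      have d6 : (n:ℤ) ∣ i⁻¹ (f (i A)) - (B + n) := by
        obtain ⟨t, ht⟩ := d5
        exact ⟨t - 1, by rw [mul_sub, mul_one]; omega⟩
      exact AffAux.unique_rep hn (c := A) d6 (by rw [← hgA]; exact hgb.1)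
        (by rw [← hgA]; exact hgb.2) (by omega) (by omega)
  refine ⟨⟨hag, hbg, hsg⟩, ⟨hag, hlift2⟩, ?_⟩
  -- the type computation
  set μ : Equiv.Perm (Fin n) := ι⁻¹ * π * ι with hμ
  have conv1 : ∑ a ∈ Finset.Icc (1:ℤ) (n:ℤ), ((i⁻¹*f*i) a - a)
      = ∑ j ∈ Finset.range n, ((i⁻¹*f*i) ((j:ℤ)+1) - ((j:ℤ)+1)) :=
    AffAux.sum_Icc_eq_range _ n
  have conv2 : ∑ j ∈ Finset.range n, ((i⁻¹*f*i) ((j:ℤ)+1) - ((j:ℤ)+1))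
      = ∑ a : Fin n, ((i⁻¹*f*i) ((a.val:ℤ)+1) - ((a.val:ℤ)+1)) :=
    (Fin.sum_univ_eq_sum_range (fun j => (i⁻¹*f*i) ((j:ℤ)+1) - ((j:ℤ)+1)) n).symm
  have conv3 : ∑ a : Fin n, ((i⁻¹*f*i) ((a.val:ℤ)+1) - ((a.val:ℤ)+1))
      = ∑ a : Fin n, ((((μ a).val:ℤ) - (a.val:ℤ))
          + (if (a.val:ℤ) < ((μ a).val:ℤ) then 0 else (n:ℤ))) := by
    apply Finset.sum_congr rfl
    intro a _
    rw [hlift2 a]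
    by_cases hc : (a.val:ℤ) < ((μ a).val:ℤ)
    · rw [if_pos hc, if_pos hc]; ring
    · rw [if_neg hc, if_neg hc]; ring
  have conv4 : ∑ a : Fin n, (((μ a).val:ℤ) - (a.val:ℤ)) = 0 := by
    rw [Finset.sum_sub_distrib, Equiv.sum_comp μ (fun b : Fin n => ((b.val:ℤ)))]
    ring
  have conv5 : ∑ a : Fin n, (if (a.val:ℤ) < ((μ a).val:ℤ) then (0:ℤ) else (n:ℤ))
      = ((Finset.univ.filter (fun a : Fin n => ¬ ((a.val:ℤ) < ((μ a).val:ℤ)))).card : ℤ)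
        * (n:ℤ) := by
    rw [Finset.sum_ite, Finset.sum_const_zero, Finset.sum_const, zero_add, nsmul_eq_mul]
  have hEq : ((Finset.univ.filter
        (fun a : Fin n => ¬ ((a.val:ℤ) < ((μ a).val:ℤ)))).card : ℤ) * (n:ℤ) = (k:ℤ) * n := by
    have h' := hsg
    rw [conv1, conv2, conv3, Finset.sum_add_distrib, conv4, conv5, zero_add] at h'
    exact h'
  have hcount : (Finset.univ.filter (fun a : Fin n => ¬ ((a.val:ℤ) < ((μ a).val:ℤ)))).card
      = k := by
    have hne : (n:ℤ) ≠ 0 := by exact_mod_cast hn.ne'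
    have := mul_right_cancel₀ hne hEq
    exact_mod_cast this
  have hfilter : (Finset.univ.filter (fun a : Fin n => ¬ ((a.val:ℤ) < ((μ a).val:ℤ))))
      = Finset.univ.filter (fun a : Fin n => μ a ≤ a) := by
    apply Finset.filter_congr
    intro a _
    simp only [not_lt, Fin.le_def]
    constructor
    · intro h; exact_mod_cast h
    · intro h; exact_mod_cast h
  have htype : (Finset.univ.filter (fun a : Fin n => a ≤ μ⁻¹ a)).card
      = (Finset.univ.filter (fun a : Fin n => μ a ≤ a)).card := by
    apply Finset.card_bij' (i := fun a _ => μ⁻¹ a) (j := fun b _ => μ b)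
    · intro a ha
      rw [Finset.mem_filter] at ha ⊢
      refine ⟨Finset.mem_univ _, ?_⟩
      rw [Equiv.Perm.apply_inv_self]
      exact ha.2
    · intro b hb
      rw [Finset.mem_filter] at hb ⊢
      refine ⟨Finset.mem_univ _, ?_⟩
      rw [Equiv.Perm.inv_apply_self]
      exact hb.2
    · intro a _
      rw [Equiv.Perm.apply_inv_self]
    · intro b _
      rw [Equiv.Perm.inv_apply_self]
  show (Finset.univ.filter (fun a : Fin n => a ≤ μ⁻¹ a)).card = k
  rw [htype, ← hfilter, hcount]
end

section
/- Let π and ι be permutations of {1,…,n} of type (k,n) with ι ≤_∘ π, with lifts f, i ∈ Bound(k,n); set r = f⁻¹·i. If the Grassmannlike necklace 𝓘_{•,ι,π} is not a weakly separated collection, then there exists an affine transposition t with ℓ(t·r) < ℓ(r) and ℓ(t·i) < ℓ(i). -/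
open Finset

section Infra

variable {n : ℕ}

/-- The inversion set underlying `aLen`. -/
def InvSet (n : ℕ) (w : Equiv.Perm ℤ) : Set (ℤ × ℤ) :=
  {p : ℤ × ℤ | 1 ≤ p.1 ∧ p.1 ≤ (n : ℤ) ∧ p.1 < p.2 ∧ w p.2 < w p.1}

lemma aLen_eq_ncard (w : Equiv.Perm ℤ) : aLen n w = (InvSet n w).ncard := rfl

lemma aff_add_mul {w : Equiv.Perm ℤ} (hw : IsAffinePerm n w) (x j : ℤ) :
    w (x + j * n) = w x + j * n := by
  induction j using Int.induction_on with
  | zero => simp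
  | succ k ih =>
      have h2 := hw (x + k * n)
      have : x + ((k : ℤ) + 1) * n = (x + k * n) + n := by ring
      rw [this, h2, ih]; ring
  | pred k ih =>
      have h2 := hw (x + (-(k : ℤ) - 1) * n)
      have : x + (-(k : ℤ) - 1) * n + n = x + (-(k:ℤ)) * n := by ring
      rw [this] at h2
      have : w (x + (-(k:ℤ) - 1) * n) = w (x + (-(k:ℤ)) * n) - n := by omega
      rw [this, ih]; ring

lemma aff_symm {w : Equiv.Perm ℤ} (hw : IsAffinePerm n w) : IsAffinePerm n w.symm := by
  intro a
  have h := hw (w.symm a)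
  apply w.injective
  rw [Equiv.apply_symm_apply, h, Equiv.apply_symm_apply]

lemma aff_inv {w : Equiv.Perm ℤ} (hw : IsAffinePerm n w) : IsAffinePerm n w⁻¹ := aff_symm hw

lemma aff_mul {w v : Equiv.Perm ℤ} (hw : IsAffinePerm n w) (hv : IsAffinePerm n v) :
    IsAffinePerm n (w * v) := by
  intro a
  simp only [Equiv.Perm.mul_apply, hv a, hw (v a)]

/-- normalization of a sorted pair into first-coordinate window `[1,n]`. -/
def npf (n : ℕ) (x y : ℤ) : ℤ × ℤ :=
  ((x - 1) % (n : ℤ) + 1, y - x + (x - 1) % (n : ℤ) + 1)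

lemma npf_shift (hn : 0 < n) (x y : ℤ) :
    ∃ j : ℤ, (npf n x y).1 = x + j * n ∧ (npf n x y).2 = y + j * n := by
  have key := Int.mul_ediv_add_emod (x - 1) (n : ℤ)
  exact ⟨-((x - 1) / n), by simp only [npf]; linear_combination key,
    by simp only [npf]; linear_combination key⟩

lemma npf_fst_bounds (hn : 0 < n) (x y : ℤ) :
    1 ≤ (npf n x y).1 ∧ (npf n x y).1 ≤ (n : ℤ) := by
  have h1 : 0 ≤ (x - 1) % (n : ℤ) := Int.emod_nonneg _ (by exact_mod_cast hn.ne')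
  have h2 : (x - 1) % (n : ℤ) < n := Int.emod_lt_of_pos _ (by exact_mod_cast hn)
  refine ⟨by simp only [npf]; omega, ?_⟩
  simp only [npf]; omega

lemma npf_diff (x y : ℤ) : (npf n x y).2 - (npf n x y).1 = y - x := by
  simp only [npf]; ring

lemma npf_eq_self (h1 : 1 ≤ x) (h2 : x ≤ (n : ℤ)) (y : ℤ) : npf n x y = (x, y) := by
  have h : (x - 1) % (n : ℤ) = x - 1 := Int.emod_eq_of_lt (by omega) (by omega)
  simp only [npf, h, Prod.mk.injEq]
  constructor <;> ring

lemma npf_eq_iff (hn : 0 < n) {x y x' y' : ℤ} (h : npf n x y = npf n x' y') :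
    ∃ j : ℤ, x = x' + j * n ∧ y = y' + j * n := by
  obtain ⟨j, hj1, hj2⟩ := npf_shift hn x y
  obtain ⟨j', hj1', hj2'⟩ := npf_shift hn x' y'
  rw [Prod.ext_iff] at h
  have e1 : x + j * (n:ℤ) = x' + j' * n := by linarith [h.1, hj1, hj1']
  have e2 : y + j * (n:ℤ) = y' + j' * n := by linarith [h.2, hj2, hj2']
  exact ⟨j' - j, by linear_combination e1, by linear_combination e2⟩

lemma mem_InvSet_npf (hn : 0 < n) {w : Equiv.Perm ℤ} (hw : IsAffinePerm n w)
    {x y : ℤ} (hxy : x < y) (hwy : w y < w x) : npf n x y ∈ InvSet n w := by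
  obtain ⟨j, hj1, hj2⟩ := npf_shift hn x y
  have hb := npf_fst_bounds hn x y
  refine ⟨hb.1, hb.2, ?_, ?_⟩
  · omega
  · rw [hj1, hj2, aff_add_mul hw, aff_add_mul hw]; omega

/-- Finiteness of the inversion set of a bounded-displacement affine permutation. -/
lemma InvSet_finite {w : Equiv.Perm ℤ} (B : ℤ)
    (hB : ∀ x : ℤ, |w x - x| ≤ B) : (InvSet n w).Finite := by
  apply Set.Finite.subset ((Finset.Icc (1:ℤ) (n:ℤ) ×ˢ Finset.Icc (2:ℤ) ((n:ℤ) + 2*B)).finite_toSet)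
  rintro ⟨x, y⟩ ⟨h1, h2, h3, h4⟩
  dsimp only at h1 h2 h3 h4
  have b1 := abs_le.mp (hB x)
  have b2 := abs_le.mp (hB y)
  simp only [Finset.coe_product, Set.mem_prod, Finset.mem_coe, Finset.mem_Icc]
  exact ⟨⟨h1, h2⟩, by omega, by omega⟩

end Infra

section PartA

variable {n : ℕ}

def sfA (n : ℕ) (u v z : ℤ) : ℤ :=
  if (n:ℤ) ∣ z - v then z - (v - u) else if (n:ℤ) ∣ z - u then z + (v - u) else z

def psiX (n : ℕ) (u v x y : ℤ) : ℤ :=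
  if (n:ℤ) ∣ x - v then x - (v - u)
  else if (n:ℤ) ∣ x - u ∧ x + (v - u) < y then x + (v - u) else x

def psiY (n : ℕ) (u v x y : ℤ) : ℤ :=
  if (n:ℤ) ∣ y - u then y + (v - u)
  else if (n:ℤ) ∣ y - v ∧ x < y - (v - u) then y - (v - u) else y

def reconX (n : ℕ) (u v a b : ℤ) : ℤ :=
  if (n:ℤ) ∣ a - v then a - (v - u)
  else if (n:ℤ) ∣ a - u ∧ v - u < b - a then a + (v - u) else a

def reconY (n : ℕ) (u v a b : ℤ) : ℤ :=
  if (n:ℤ) ∣ b - u then b + (v - u)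
  else if (n:ℤ) ∣ b - v ∧ v - u < b - a then b - (v - u) else b

lemma dvd_shift_iff (j a : ℤ) : ((n:ℤ) ∣ a + j * n ↔ (n:ℤ) ∣ a) := by
  constructor
  · intro h
    have h2 := h.sub (⟨j, by ring⟩ : (n:ℤ) ∣ j * n)
    simpa using h2
  · intro h
    exact h.add ⟨j, by ring⟩

lemma reconXY_shift (u v a b j : ℤ) :
    reconX n u v (a + j * n) (b + j * n) = reconX n u v a b + j * n ∧
    reconY n u v (a + j * n) (b + j * n) = reconY n u v a b + j * n := by
  have hsh : ∀ z c : ℤ, ((n:ℤ) ∣ (z + j * n) - c ↔ (n:ℤ) ∣ z - c) := by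
    intro z c
    rw [show (z + j * n) - c = (z - c) + j * (n:ℤ) by ring]
    exact dvd_shift_iff j (z - c)
  have hdiff : (b + j * n) - (a + j * n) = b - a := by ring
  constructor <;>
  · simp only [reconX, reconY, hdiff, hsh]
    split_ifs <;> ring

lemma psi_main (hn : 0 < n) {w : Equiv.Perm ℤ} (hw : IsAffinePerm n w)
    {u v : ℤ} (huv : u < v) (hnd : ¬ (n:ℤ) ∣ (v - u)) (hwvu : w v < w u)
    (x y : ℤ) (hp : x < y) (hinv : w (sfA n u v y) < w (sfA n u v x)) :
    psiX n u v x y < psiY n u v x y ∧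
    w (psiY n u v x y) < w (psiX n u v x y) ∧
    (((n:ℤ) ∣ psiX n u v x y - u ∧ (n:ℤ) ∣ psiY n u v x y - v) →
        psiY n u v x y - psiX n u v x y ≠ v - u) ∧
    reconX n u v (psiX n u v x y) (psiY n u v x y) = x ∧
    reconY n u v (psiX n u v x y) (psiY n u v x y) = y := by
  have hN : (0:ℤ) < n := by exact_mod_cast hn
  have dn : ∀ a : ℤ, (n:ℤ) ∣ a * n := fun a => ⟨a, by ring⟩
  have hnd' : ¬ (n:ℤ) ∣ (u - v) := fun hc => hnd (by rw [show v - u = -(u - v) by ring]; exact dvd_neg.mpr hc)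
  have Huu : ∀ a : ℤ, (n:ℤ) ∣ (u + a * n) - u := fun a => ⟨a, by ring⟩
  have Hvv : ∀ a : ℤ, (n:ℤ) ∣ (v + a * n) - v := fun a => ⟨a, by ring⟩
  have Huv : ∀ a : ℤ, ¬ (n:ℤ) ∣ (u + a * n) - v := by
    intro a hc
    apply hnd'
    have h2 := hc.sub (dn a)
    rwa [show (u + a * n) - v - a * n = u - v by ring] at h2
  have Hvu : ∀ a : ℤ, ¬ (n:ℤ) ∣ (v + a * n) - u := by
    intro a hc
    apply hnd
    have h2 := hc.sub (dn a)
    rwa [show (v + a * n) - u - a * n = v - u by ring] at h2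
  have excl : ∀ z : ℤ, (n:ℤ) ∣ z - v → (n:ℤ) ∣ z - u → False := by
    intro z h1 h2
    exact hnd (by rw [show v - u = (z - u) - (z - v) by ring]; exact h2.sub h1)
  have wAt : ∀ c a : ℤ, w (c + a * n) = w c + a * n := fun c a => aff_add_mul hw c a
  by_cases hxv : (n:ℤ) ∣ x - v
  · obtain ⟨a, hxa⟩ : ∃ a : ℤ, x = v + a * n := ⟨hxv.choose, by have := hxv.choose_spec; linarith⟩
    have hxu : ¬ (n:ℤ) ∣ x - u := fun hc => excl x hxv hc
    have hsx : sfA n u v x = x - (v - u) := by simp only [sfA]; rw [if_pos hxv]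
    have ePX : psiX n u v x y = x - (v - u) := by simp only [psiX]; rw [if_pos hxv]
    have hxc : x - (v - u) = u + a * n := by rw [hxa]; ring
    have wx1 : w (x - (v - u)) = w u + a * n := by rw [hxc, wAt]
    by_cases hyu : (n:ℤ) ∣ y - u
    · -- C9 (V, U)
      obtain ⟨b, hyb⟩ : ∃ b : ℤ, y = u + b * n := ⟨hyu.choose, by have := hyu.choose_spec; linarith⟩
      have hyv : ¬ (n:ℤ) ∣ y - v := fun hc => excl y hc hyu
      have hsy : sfA n u v y = y + (v - u) := by simp only [sfA]; rw [if_neg hyv, if_pos hyu]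
      have ePY : psiY n u v x y = y + (v - u) := by simp only [psiY]; rw [if_pos hyu]
      have hyc : y + (v - u) = v + b * n := by rw [hyb]; ring
      have wy1 : w (y + (v - u)) = w v + b * n := by rw [hyc, wAt]
      rw [hsx, hsy] at hinv
      rw [ePX, ePY]
      refine ⟨by linarith, hinv, fun _ => by linarith, ?_, ?_⟩
      · have r1 : ¬ (n:ℤ) ∣ x - (v - u) - v := by
          rw [show x - (v - u) - v = u + a * (n:ℤ) - v by rw [hxa]; ring]
          exact Huv a
        have r2 : (n:ℤ) ∣ x - (v - u) - u := by
          rw [show x - (v - u) - u = u + a * (n:ℤ) - u by rw [hxa]; ring]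
          exact Huu a
        simp only [reconX]
        rw [if_neg r1, if_pos ⟨r2, by linarith⟩]
        ring
      · have r3 : ¬ (n:ℤ) ∣ y + (v - u) - u := by
          rw [show y + (v - u) - u = v + b * (n:ℤ) - u by rw [hyb]; ring]
          exact Hvu b
        have r4 : (n:ℤ) ∣ y + (v - u) - v := by
          rw [show y + (v - u) - v = v + b * (n:ℤ) - v by rw [hyb]; ring]
          exact Hvv b
        simp only [reconY]
        rw [if_neg r3, if_pos ⟨r4, by linarith⟩]
        ring
    · by_cases hyv : (n:ℤ) ∣ y - v
      · -- (V,V) impossible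
        obtain ⟨b, hyb⟩ : ∃ b : ℤ, y = v + b * n :=
          ⟨hyv.choose, by have := hyv.choose_spec; linarith⟩
        have hsy : sfA n u v y = y - (v - u) := by simp only [sfA]; rw [if_pos hyv]
        rw [hsx, hsy] at hinv
        have e1 : w (y - (v-u)) = w u + b * n := by
          rw [show y - (v-u) = u + b * n by rw [hyb]; ring, wAt]
        have e2 : w x = w v + a * n := by rw [hxa, wAt]
        have e3 : w y = w v + b * n := by rw [hyb, wAt]
        rw [e1, wx1] at hinv
        exact absurd hinv (by rw [hxa, hyb] at hp; linarith)
      · -- C7 (V, O)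
        have hsy : sfA n u v y = y := by simp only [sfA]; rw [if_neg hyv, if_neg hyu]
        have ePY : psiY n u v x y = y := by
          simp only [psiY]; rw [if_neg hyu, if_neg (fun hc => hyv hc.1)]
        rw [hsx, hsy] at hinv
        rw [ePX, ePY]
        refine ⟨by linarith, hinv, fun hc => absurd hc.2 hyv, ?_, ?_⟩
        · have r1 : ¬ (n:ℤ) ∣ x - (v - u) - v := by
            rw [show x - (v - u) - v = u + a * (n:ℤ) - v by rw [hxa]; ring]
            exact Huv a
          have r2 : (n:ℤ) ∣ x - (v - u) - u := by
            rw [show x - (v - u) - u = u + a * (n:ℤ) - u by rw [hxa]; ring]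
            exact Huu a
          simp only [reconX]
          rw [if_neg r1, if_pos ⟨r2, by linarith⟩]
          ring
        · simp only [reconY]
          rw [if_neg hyu, if_neg (fun hc => hyv hc.1)]
  · by_cases hxu : (n:ℤ) ∣ x - u
    · obtain ⟨a, hxa⟩ : ∃ a : ℤ, x = u + a * n := ⟨hxu.choose, by have := hxu.choose_spec; linarith⟩
      have hsx : sfA n u v x = x + (v - u) := by simp only [sfA]; rw [if_neg hxv, if_pos hxu]
      have hxc : x + (v - u) = v + a * n := by rw [hxa]; ring
      have wx1 : w (x + (v - u)) = w v + a * n := by rw [hxc, wAt]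
      by_cases hyu : (n:ℤ) ∣ y - u
      · -- (U,U) impossible
        obtain ⟨b, hyb⟩ : ∃ b : ℤ, y = u + b * n :=
          ⟨hyu.choose, by have := hyu.choose_spec; linarith⟩
        have hyv : ¬ (n:ℤ) ∣ y - v := fun hc => excl y hc hyu
        have hsy : sfA n u v y = y + (v - u) := by simp only [sfA]; rw [if_neg hyv, if_pos hyu]
        rw [hsx, hsy] at hinv
        have e1 : w (y + (v-u)) = w v + b * n := by
          rw [show y + (v-u) = v + b * n by rw [hyb]; ring, wAt]
        rw [e1, wx1] at hinv
        exact absurd hinv (by rw [hxa, hyb] at hp; linarith)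
      · by_cases hyv : (n:ℤ) ∣ y - v
        · -- C6 (U, V)
          obtain ⟨b, hyb⟩ : ∃ b : ℤ, y = v + b * n :=
            ⟨hyv.choose, by have := hyv.choose_spec; linarith⟩
          have hsy : sfA n u v y = y - (v - u) := by simp only [sfA]; rw [if_pos hyv]
          rw [hsx, hsy] at hinv
          have e1 : w (y - (v-u)) = w u + b * n := by
            rw [show y - (v-u) = u + b * n by rw [hyb]; ring, wAt]
          rw [e1, wx1] at hinv
          -- hinv : w u + b * n < w v + a * n  ⇒  b*n < a*n
          have hba : b * n < a * n := by linarith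
          have ePX : psiX n u v x y = x := by
            simp only [psiX]
            rw [if_neg hxv, if_neg (fun hc => absurd hc.2 (by rw [hxc, hyb]; push_neg; linarith))]
          have ePY : psiY n u v x y = y := by
            simp only [psiY]
            rw [if_neg hyu, if_neg (fun hc => absurd hc.2
              (by rw [show y - (v-u) = u + b*n by rw [hyb]; ring, hxa]; push_neg; linarith))]
          rw [ePX, ePY]
          have wxe : w x = w u + a * n := by rw [hxa, wAt]
          have wye : w y = w v + b * n := by rw [hyb, wAt]
          refine ⟨hp, by linarith, fun _ => by rw [hxa, hyb]; intro hc; linarith, ?_, ?_⟩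
          · simp only [reconX]
            rw [if_neg hxv, if_neg (fun hc => absurd hc.2 (by rw [hxa, hyb]; push_neg; linarith))]
          · simp only [reconY]
            rw [if_neg hyu, if_neg (fun hc => absurd hc.2 (by rw [hxa, hyb]; push_neg; linarith))]
        · -- C2 / C3 (U, O)
          have hsy : sfA n u v y = y := by simp only [sfA]; rw [if_neg hyv, if_neg hyu]
          rw [hsx, hsy] at hinv
          -- hinv : w y < w (x + (v-u)) = w v + a * n
          rw [wx1] at hinv
          have wxe : w x = w u + a * n := by rw [hxa, wAt]
          have hne : y ≠ x + (v - u) := by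
            intro hc
            exact hyv (by rw [hc, hxc]; exact Hvv a)
          by_cases hyx : x + (v - u) < y
          · -- C3
            have ePX : psiX n u v x y = x + (v - u) := by
              simp only [psiX]; rw [if_neg hxv, if_pos ⟨hxu, hyx⟩]
            have ePY : psiY n u v x y = y := by
              simp only [psiY]; rw [if_neg hyu, if_neg (fun hc => hyv hc.1)]
            rw [ePX, ePY]
            refine ⟨hyx, by rw [wx1]; exact hinv,
              fun hc => absurd hc.1 (by rw [hxc]; exact Hvu a), ?_, ?_⟩
            · have r1 : (n:ℤ) ∣ x + (v - u) - v := by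
                rw [show x + (v - u) - v = v + a * (n:ℤ) - v by rw [hxa]; ring]
                exact Hvv a
              simp only [reconX]
              rw [if_pos r1]
              ring
            · simp only [reconY]
              rw [if_neg hyu, if_neg (fun hc => hyv hc.1)]
          · -- C2
            have hyx2 : y < x + (v - u) := by
              rcases lt_or_eq_of_le (not_lt.mp hyx) with h | h
              · exact h
              · exact absurd h hne
            have ePX : psiX n u v x y = x := by
              simp only [psiX]; rw [if_neg hxv, if_neg (fun hc => absurd hc.2 (by linarith))]
            have ePY : psiY n u v x y = y := by
              simp only [psiY]; rw [if_neg hyu, if_neg (fun hc => hyv hc.1)]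
            rw [ePX, ePY]
            refine ⟨hp, by linarith, fun hc => absurd hc.2 hyv, ?_, ?_⟩
            · simp only [reconX]
              rw [if_neg hxv, if_neg (fun hc => absurd hc.2 (by linarith))]
            · simp only [reconY]
              rw [if_neg hyu, if_neg (fun hc => hyv hc.1)]
    · -- x is O-class
      have hsx : sfA n u v x = x := by simp only [sfA]; rw [if_neg hxv, if_neg hxu]
      rw [hsx] at hinv
      by_cases hyu : (n:ℤ) ∣ y - u
      · -- C8 (O, U)
        obtain ⟨b, hyb⟩ : ∃ b : ℤ, y = u + b * n :=
          ⟨hyu.choose, by have := hyu.choose_spec; linarith⟩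
        have hyv : ¬ (n:ℤ) ∣ y - v := fun hc => excl y hc hyu
        have hsy : sfA n u v y = y + (v - u) := by simp only [sfA]; rw [if_neg hyv, if_pos hyu]
        rw [hsy] at hinv
        have hyc : y + (v - u) = v + b * n := by rw [hyb]; ring
        have ePX : psiX n u v x y = x := by
          simp only [psiX]; rw [if_neg hxv, if_neg (fun hc => hxu hc.1)]
        have ePY : psiY n u v x y = y + (v - u) := by simp only [psiY]; rw [if_pos hyu]
        rw [ePX, ePY]
        refine ⟨by linarith, hinv, fun hc => absurd hc.1 hxu, ?_, ?_⟩
        · simp only [reconX]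
          rw [if_neg hxv, if_neg (fun hc => hxu hc.1)]
        · have r3 : ¬ (n:ℤ) ∣ y + (v - u) - u := by
            rw [show y + (v - u) - u = v + b * (n:ℤ) - u by rw [hyb]; ring]
            exact Hvu b
          have r4 : (n:ℤ) ∣ y + (v - u) - v := by
            rw [show y + (v - u) - v = v + b * (n:ℤ) - v by rw [hyb]; ring]
            exact Hvv b
          simp only [reconY]
          rw [if_neg r3, if_pos ⟨r4, by linarith⟩]
          ring
      · by_cases hyv : (n:ℤ) ∣ y - v
        · -- C4 / C5 (O, V)
          obtain ⟨b, hyb⟩ : ∃ b : ℤ, y = v + b * n :=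
            ⟨hyv.choose, by have := hyv.choose_spec; linarith⟩
          have hsy : sfA n u v y = y - (v - u) := by simp only [sfA]; rw [if_pos hyv]
          rw [hsy] at hinv
          have hyc : y - (v - u) = u + b * n := by rw [hyb]; ring
          have wye : w y = w v + b * n := by rw [hyb, wAt]
          have wy1 : w (y - (v - u)) = w u + b * n := by rw [hyc, wAt]
          have hne : y - (v - u) ≠ x := by
            intro hc
            exact hxu (by rw [← hc, hyc]; exact Huu b)
          have ePX : psiX n u v x y = x := by
            simp only [psiX]; rw [if_neg hxv, if_neg (fun hc => hxu hc.1)]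
          by_cases hxy : x < y - (v - u)
          · -- C5
            have ePY : psiY n u v x y = y - (v - u) := by
              simp only [psiY]; rw [if_neg hyu, if_pos ⟨hyv, hxy⟩]
            rw [ePX, ePY]
            refine ⟨hxy, hinv, fun hc => absurd hc.1 hxu, ?_, ?_⟩
            · simp only [reconX]
              rw [if_neg hxv, if_neg (fun hc => hxu hc.1)]
            · have r3 : (n:ℤ) ∣ y - (v - u) - u := by
                rw [show y - (v - u) - u = u + b * (n:ℤ) - u by rw [hyb]; ring]
                exact Huu b
              simp only [reconY]
              rw [if_pos r3]
              ring
          · -- C4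
            have hxy2 : y - (v - u) < x := by
              rcases lt_or_eq_of_le (not_lt.mp hxy) with h | h
              · exact h
              · exact absurd h hne
            have ePY : psiY n u v x y = y := by
              simp only [psiY]; rw [if_neg hyu, if_neg (fun hc => absurd hc.2 (by linarith))]
            rw [ePX, ePY]
            refine ⟨hp, by rw [wye]; linarith [hinv, wy1], fun hc => absurd hc.1 hxu, ?_, ?_⟩
            · simp only [reconX]
              rw [if_neg hxv, if_neg (fun hc => hxu hc.1)]
            · simp only [reconY]
              rw [if_neg hyu, if_neg (fun hc => absurd hc.2 (by linarith))]
        · -- C1 (O, O)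
          have hsy : sfA n u v y = y := by simp only [sfA]; rw [if_neg hyv, if_neg hyu]
          rw [hsy] at hinv
          have ePX : psiX n u v x y = x := by
            simp only [psiX]; rw [if_neg hxv, if_neg (fun hc => hxu hc.1)]
          have ePY : psiY n u v x y = y := by
            simp only [psiY]; rw [if_neg hyu, if_neg (fun hc => hyv hc.1)]
          rw [ePX, ePY]
          refine ⟨hp, hinv, fun hc => absurd hc.1 hxu, ?_, ?_⟩
          · simp only [reconX]
            rw [if_neg hxv, if_neg (fun hc => hxu hc.1)]
          · simp only [reconY]
            rw [if_neg hyu, if_neg (fun hc => hyv hc.1)]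

end PartA

section PartA2

variable {n : ℕ}

lemma aLen_transp_mul_lt (hn : 0 < n) {w t : Equiv.Perm ℤ} (hw : IsAffinePerm n w)
    (B : ℤ) (hB : ∀ x : ℤ, |w x - x| ≤ B)
    {u v : ℤ} (huv : u < v) (hnd : ¬ (n:ℤ) ∣ (v - u)) (hwvu : w v < w u)
    (ht : IsAffTranspAt n (w v) (w u) t) :
    aLen n (t * w) < aLen n w := by
  have hN : (0:ℤ) < n := by exact_mod_cast hn
  have excl : ∀ z : ℤ, (n:ℤ) ∣ z - v → (n:ℤ) ∣ z - u → False := by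
    intro z h1 h2
    exact hnd (by rw [show v - u = (z - u) - (z - v) by ring]; exact h2.sub h1)
  have wAt : ∀ c a : ℤ, w (c + a * n) = w c + a * n := fun c a => aff_add_mul hw c a
  have hE : ∀ z : ℤ, (t * w) z = w (sfA n u v z) := by
    intro z
    show t (w z) = _
    by_cases hzv : (n:ℤ) ∣ z - v
    · obtain ⟨a, hza⟩ : ∃ a : ℤ, z = v + a * n := ⟨hzv.choose, by have := hzv.choose_spec; linarith⟩
      have wz : w z = w v + a * n := by rw [hza, wAt]
      have hdvd : (n:ℤ) ∣ w z - w v := by rw [wz]; exact ⟨a, by ring⟩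
      rw [(ht.2 (w z)).1 hdvd]
      have hs : sfA n u v z = z - (v - u) := by simp only [sfA]; rw [if_pos hzv]
      rw [hs, show z - (v - u) = u + a * (n:ℤ) by rw [hza]; ring, wAt]
      rw [wz]; ring
    · by_cases hzu : (n:ℤ) ∣ z - u
      · obtain ⟨a, hza⟩ : ∃ a : ℤ, z = u + a * n :=
          ⟨hzu.choose, by have := hzu.choose_spec; linarith⟩
        have wz : w z = w u + a * n := by rw [hza, wAt]
        have hdvd : (n:ℤ) ∣ w z - w u := by rw [wz]; exact ⟨a, by ring⟩
        rw [(ht.2 (w z)).2.1 hdvd]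
        have hs : sfA n u v z = z + (v - u) := by simp only [sfA]; rw [if_neg hzv, if_pos hzu]
        rw [hs, show z + (v - u) = v + a * (n:ℤ) by rw [hza]; ring, wAt]
        rw [wz]; ring
      · have h1 : ¬ (n:ℤ) ∣ w z - w v := by
          rintro ⟨a, hdz⟩
          apply hzv
          have : w z = w (v + a * n) := by rw [wAt]; linarith
          have hz : z = v + a * n := w.injective this
          exact ⟨a, by rw [hz]; ring⟩
        have h2 : ¬ (n:ℤ) ∣ w z - w u := by
          rintro ⟨a, hdz⟩
          apply hzu
          have : w z = w (u + a * n) := by rw [wAt]; linarith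
          have hz : z = u + a * n := w.injective this
          exact ⟨a, by rw [hz]; ring⟩
        rw [(ht.2 (w z)).2.2 h1 h2]
        have hs : sfA n u v z = z := by simp only [sfA]; rw [if_neg hzv, if_neg hzu]
        rw [hs]
  have hfin : (InvSet n w).Finite := InvSet_finite B hB
  have hp0 : npf n u v ∈ InvSet n w := mem_InvSet_npf hn hw huv hwvu
  have key : ∀ p ∈ InvSet n (t * w),
      psiX n u v p.1 p.2 < psiY n u v p.1 p.2 ∧
      w (psiY n u v p.1 p.2) < w (psiX n u v p.1 p.2) ∧
      (((n:ℤ) ∣ psiX n u v p.1 p.2 - u ∧ (n:ℤ) ∣ psiY n u v p.1 p.2 - v) →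
          psiY n u v p.1 p.2 - psiX n u v p.1 p.2 ≠ v - u) ∧
      reconX n u v (psiX n u v p.1 p.2) (psiY n u v p.1 p.2) = p.1 ∧
      reconY n u v (psiX n u v p.1 p.2) (psiY n u v p.1 p.2) = p.2 := by
    rintro p ⟨hb1, hb2, hlt, hi⟩
    rw [hE, hE] at hi
    exact psi_main hn hw huv hnd hwvu p.1 p.2 hlt hi
  have hmaps : ∀ p ∈ InvSet n (t * w),
      npf n (psiX n u v p.1 p.2) (psiY n u v p.1 p.2) ∈ InvSet n w \ {npf n u v} := by
    intro p hp
    obtain ⟨k1, k2, k3, _, _⟩ := key p hp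
    refine ⟨mem_InvSet_npf hn hw k1 k2, ?_⟩
    intro hmem
    obtain ⟨j, hj1, hj2⟩ := npf_eq_iff hn (Set.mem_singleton_iff.mp hmem)
    have d1 : (n:ℤ) ∣ psiX n u v p.1 p.2 - u := ⟨j, by linear_combination hj1⟩
    have d2 : (n:ℤ) ∣ psiY n u v p.1 p.2 - v := ⟨j, by linear_combination hj2⟩
    exact k3 ⟨d1, d2⟩ (by omega)
  have hinj : Set.InjOn (fun p : ℤ × ℤ => npf n (psiX n u v p.1 p.2) (psiY n u v p.1 p.2))
      (InvSet n (t * w)) := by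
    intro p hp q hq heq
    obtain ⟨_, _, _, rx, ry⟩ := key p hp
    obtain ⟨_, _, _, rx', ry'⟩ := key q hq
    obtain ⟨j, hj1, hj2⟩ := npf_eq_iff hn heq
    have sh := reconXY_shift (n := n) u v (psiX n u v q.1 q.2) (psiY n u v q.1 q.2) j
    have e1 : p.1 = q.1 + j * n := by
      rw [← rx, hj1, hj2, sh.1, rx']
    have e2 : p.2 = q.2 + j * n := by
      rw [← ry, hj1, hj2, sh.2, ry']
    have hb1 := hp.1; have hb2 := hp.2.1
    have hb1' := hq.1; have hb2' := hq.2.1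
    have hj0 : j = 0 := by
      rcases lt_trichotomy j 0 with h | h | h
      · have : j * (n:ℤ) ≤ -1 * n := mul_le_mul_of_nonneg_right (by omega) (by omega)
        linarith
      · exact h
      · have : 1 * (n:ℤ) ≤ j * n := mul_le_mul_of_nonneg_right (by omega) (by omega)
        linarith
    rw [hj0] at e1 e2
    exact Prod.ext (by omega) (by omega)
  rw [aLen_eq_ncard, aLen_eq_ncard]
  calc (InvSet n (t * w)).ncard
      ≤ (InvSet n w \ {npf n u v}).ncard :=
        Set.ncard_le_ncard_of_injOn _ hmaps hinj hfin.diff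
    _ < (InvSet n w).ncard := Set.ncard_diff_singleton_lt_of_mem hp0 hfin

end PartA2

section PartAdd

variable {n : ℕ}

lemma shift_j_eq_zero (hn : 0 < n) {a b j : ℤ} (h1 : 1 ≤ a) (h2 : a ≤ n)
    (h3 : 1 ≤ b) (h4 : b ≤ n) (he : a = b + j * n) : j = 0 := by
  rcases lt_trichotomy j 0 with h | h | h
  · have : j * (n:ℤ) ≤ -1 * n := mul_le_mul_of_nonneg_right (by omega) (by omega)
    linarith
  · exact h
  · have : 1 * (n:ℤ) ≤ j * n := mul_le_mul_of_nonneg_right (by omega) (by omega)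
    linarith

lemma perm_symm_bounds {f : Equiv.Perm ℤ} (hfb : ∀ a : ℤ, a < f a ∧ f a ≤ a + n) (y : ℤ) :
    f.symm y < y ∧ y ≤ f.symm y + n := by
  have := hfb (f.symm y)
  rwa [Equiv.apply_symm_apply] at this

lemma add_violation (hn : 0 < n) {f i : Equiv.Perm ℤ}
    (hfa : IsAffinePerm n f) (hia : IsAffinePerm n i)
    (hfb : ∀ a : ℤ, a < f a ∧ f a ≤ a + n) (hib : ∀ a : ℤ, a < i a ∧ i a ≤ a + n)
    (hle : aLen n f = aLen n i + aLen n (i⁻¹ * f))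
    {α β : ℤ} (hab : α < β) (hi2 : i.symm β < i.symm α) (hf2 : f.symm α < f.symm β) : False := by
  classical
  have hN : (0:ℤ) < n := by exact_mod_cast hn
  set s : Equiv.Perm ℤ := i⁻¹ * f with hs
  have hsa : IsAffinePerm n s := aff_mul (aff_inv hia) hfa
  have hsapp : ∀ z : ℤ, s z = i.symm (f z) := fun z => rfl
  have hsB : ∀ x : ℤ, |s x - x| ≤ n := by
    intro x
    have h1 := hfb x
    have h2 := perm_symm_bounds hib (f x)
    rw [abs_le]
    constructor <;> [skip; skip] <;> simp only [hsapp] <;> omega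
  have hiB : ∀ x : ℤ, |i x - x| ≤ n := by
    intro x
    have := hib x
    rw [abs_le]
    omega
  have hfins : (InvSet n s).Finite := InvSet_finite (n:ℤ) hsB
  have hfini : (InvSet n i).Finite := InvSet_finite (n:ℤ) hiB
  have hsfa : s (f.symm α) = i.symm α := by rw [hsapp, Equiv.apply_symm_apply]
  have hsfb : s (f.symm β) = i.symm β := by rw [hsapp, Equiv.apply_symm_apply]
  have hp0 : npf n (f.symm α) (f.symm β) ∈ InvSet n s :=
    mem_InvSet_npf hn hsa hf2 (by rw [hsfa, hsfb]; exact hi2)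
  have hq0 : npf n (i.symm β) (i.symm α) ∈ InvSet n i :=
    mem_InvSet_npf hn hia hi2
      (by rw [Equiv.apply_symm_apply, Equiv.apply_symm_apply]; exact hab)
  set p0 := npf n (f.symm α) (f.symm β) with hp0def
  set q0 := npf n (i.symm β) (i.symm α) with hq0def
  set T : Set (ℤ × ℤ) :=
    (InvSet n s \ {p0}) ∪ (fun q : ℤ × ℤ => (q.1 + n, q.2 + n)) '' (InvSet n i \ {q0}) with hT
  set Θ : ℤ × ℤ → ℤ × ℤ := fun p =>
    if s p.2 < s p.1 then p
    else ((npf n (s p.1) (s p.2)).1 + n, (npf n (s p.1) (s p.2)).2 + n) with hΘ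
  -- p0 is not an inversion of f
  have hp0f : f p0.2 < f p0.1 → False := by
    intro hc
    obtain ⟨j, hj1, hj2⟩ := npf_shift hn (f.symm α) (f.symm β)
    rw [hp0def] at hc
    rw [hj1, hj2, aff_add_mul hfa, aff_add_mul hfa, Equiv.apply_symm_apply,
      Equiv.apply_symm_apply] at hc
    omega
  have hmaps : ∀ p ∈ InvSet n f, Θ p ∈ T := by
    rintro p ⟨hb1, hb2, hlt, hfp⟩
    by_cases hss : s p.2 < s p.1
    · left
      rw [hΘ]
      simp only [if_pos hss]
      refine ⟨⟨hb1, hb2, hlt, hss⟩, ?_⟩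
      intro hmem
      apply hp0f
      rw [← Set.mem_singleton_iff.mp hmem]
      exact hfp
    · right
      have hne : s p.1 ≠ s p.2 := fun hc => (by omega : p.1 ≠ p.2) (s.injective hc)
      have hss' : s p.1 < s p.2 := by omega
      have hq : npf n (s p.1) (s p.2) ∈ InvSet n i := by
        apply mem_InvSet_npf hn hia hss'
        rw [hsapp, hsapp, Equiv.apply_symm_apply, Equiv.apply_symm_apply]
        exact hfp
      refine ⟨npf n (s p.1) (s p.2), ⟨hq, ?_⟩, by rw [hΘ]; simp only [if_neg hss]⟩
      intro hmem
      obtain ⟨j, hj1, hj2⟩ := npf_eq_iff hn (Set.mem_singleton_iff.mp hmem)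
      have e1 : p.1 = f.symm β + j * n := by
        apply s.injective
        rw [hj1, aff_add_mul hsa, hsfb]
      have e2 : p.2 = f.symm α + j * n := by
        apply s.injective
        rw [hj2, aff_add_mul hsa, hsfa]
      rw [e1, e2] at hlt
      omega
  have hinj : Set.InjOn Θ (InvSet n f) := by
    rintro p hp q hq heq
    have hb1 := hp.1; have hb2 := hp.2.1
    have hb1' := hq.1; have hb2' := hq.2.1
    have hbq1 := (npf_fst_bounds (y := s p.2) hn (s p.1)).1
    by_cases h1 : s p.2 < s p.1 <;> by_cases h2 : s q.2 < s q.1 <;>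
      rw [hΘ] at heq <;> simp only [if_pos, if_neg, h1, h2, if_true, if_false] at heq
    · exact heq
    · exfalso
      have := (npf_fst_bounds (y := s q.2) hn (s q.1)).1
      have hfst := congrArg Prod.fst heq
      simp only at hfst
      omega
    · exfalso
      have := (npf_fst_bounds (y := s p.2) hn (s p.1)).1
      have hfst := congrArg Prod.fst heq
      simp only at hfst
      omega
    · have heq2 : npf n (s p.1) (s p.2) = npf n (s q.1) (s q.2) := by
        have hfst := congrArg Prod.fst heq
        have hsnd := congrArg Prod.snd heq
        simp only at hfst hsnd
        exact Prod.ext (by omega) (by omega)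
      obtain ⟨j, hj1, hj2⟩ := npf_eq_iff hn heq2
      have e1 : p.1 = q.1 + j * n := s.injective (by rw [hj1, aff_add_mul hsa])
      have e2 : p.2 = q.2 + j * n := s.injective (by rw [hj2, aff_add_mul hsa])
      have hj0 : j = 0 := shift_j_eq_zero hn hb1 hb2 hb1' hb2' e1
      rw [hj0] at e1 e2
      exact Prod.ext (by omega) (by omega)
  have hTfin : T.Finite := hfins.diff.union ((hfini.diff).image _)
  have hA : (InvSet n s \ {p0}).ncard < (InvSet n s).ncard :=
    Set.ncard_diff_singleton_lt_of_mem hp0 hfins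
  have hBi : ((fun q : ℤ × ℤ => (q.1 + n, q.2 + n)) '' (InvSet n i \ {q0})).ncard
      ≤ (InvSet n i \ {q0}).ncard := Set.ncard_image_le hfini.diff
  have hB2 : (InvSet n i \ {q0}).ncard < (InvSet n i).ncard :=
    Set.ncard_diff_singleton_lt_of_mem hq0 hfini
  have hcount : aLen n f ≤ T.ncard := by
    rw [aLen_eq_ncard]
    exact Set.ncard_le_ncard_of_injOn Θ hmaps hinj hTfin
  have hTle : T.ncard ≤ (InvSet n s \ {p0}).ncard +
      ((fun q : ℤ × ℤ => (q.1 + n, q.2 + n)) '' (InvSet n i \ {q0})).ncard :=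
    Set.ncard_union_le _ _
  have e_s := aLen_eq_ncard (n := n) s
  have e_i := aLen_eq_ncard (n := n) i
  have e_f := aLen_eq_ncard (n := n) f
  omega

end PartAdd

section GBounds

variable {n : ℕ}

lemma g_bounds (hn : 0 < n) {f i : Equiv.Perm ℤ}
    (hfa : IsAffinePerm n f) (hia : IsAffinePerm n i)
    (hfb : ∀ a : ℤ, a < f a ∧ f a ≤ a + n) (hib : ∀ a : ℤ, a < i a ∧ i a ≤ a + n)
    (hle : aLen n f = aLen n i + aLen n (i⁻¹ * f)) :
    ∀ x : ℤ, x < i.symm (f (i x)) ∧ i.symm (f (i x)) ≤ x + n := by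
  intro x
  constructor
  · by_contra hcon
    push_neg at hcon
    apply add_violation hn hfa hia hfb hib hle
      (α := i x) (β := f (i x)) ((hfb (i x)).1)
    · rw [Equiv.symm_apply_apply]
      rcases lt_or_eq_of_le hcon with h | h
      · exact h
      · exfalso
        have : f (i x) = i x := by
          have := congrArg i h
          rwa [Equiv.apply_symm_apply] at this
        have := (hfb (i x)).1
        omega
    · rw [Equiv.symm_apply_apply]
      exact (perm_symm_bounds hfb (i x)).1
  · by_contra hcon
    push_neg at hcon
    have hin : i (x + n) = i x + n := hia x
    have hne : f (i x) ≠ i x + n := by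
      intro h
      have : i.symm (f (i x)) = x + n := by rw [h, ← hin, Equiv.symm_apply_apply]
      omega
    apply add_violation hn hfa hia hfb hib hle
      (α := f (i x)) (β := i x + n)
      (by rcases lt_or_eq_of_le (hfb (i x)).2 with h | h
          · exact h
          · exact absurd h hne)
    · rw [← hin, Equiv.symm_apply_apply]
      exact hcon
    · rw [Equiv.symm_apply_apply]
      have hb := perm_symm_bounds hfb (i x + n)
      rcases lt_or_eq_of_le (by omega : i x ≤ f.symm (i x + n)) with h | h
      · exact h
      · exfalso
        apply hne
        have h2 := congrArg f h.symm
        rw [Equiv.apply_symm_apply] at h2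
        omega
  
lemma mul_n_five (hN : 0 < (n:ℤ)) (t : ℤ) :
    t * (n:ℤ) ≤ -2*n ∨ t * (n:ℤ) = -n ∨ t * (n:ℤ) = 0 ∨ t * (n:ℤ) = n ∨ 2*(n:ℤ) ≤ t * n := by
  rcases le_or_gt t (-2) with h | h
  · left; calc t * (n:ℤ) ≤ -2 * n := mul_le_mul_of_nonneg_right h (by omega)
      _ = -2*n := by ring
  rcases eq_or_lt_of_le (by omega : (-1:ℤ) ≤ t) with h1 | h1
  · right; left; rw [← h1]; ring
  rcases eq_or_lt_of_le (by omega : (0:ℤ) ≤ t) with h2 | h2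
  · right; right; left; rw [← h2]; ring
  rcases eq_or_lt_of_le (by omega : (1:ℤ) ≤ t) with h3 | h3
  · right; right; right; left; rw [← h3]; ring
  · right; right; right; right
    calc 2 * (n:ℤ) ≤ t * n := mul_le_mul_of_nonneg_right (by omega) (by omega)

lemma emod_eval (hN : 0 < (n:ℤ)) {z r : ℤ} (j : ℤ) (hz : z = r + j * n)
    (h0 : 0 ≤ r) (h1 : r < n) : z % (n:ℤ) = r := by
  rw [hz, Int.add_mul_emod_self_right, Int.emod_eq_of_lt h0 h1]

lemma emod_decomp (hN : 0 < (n:ℤ)) (x : ℤ) :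
    ∃ q : ℤ, x = q * n + x % n ∧ 0 ≤ x % (n:ℤ) ∧ x % (n:ℤ) < n := by
  refine ⟨x / n, ?_, Int.emod_nonneg x (by omega), Int.emod_lt_of_pos x hN⟩
  have := Int.mul_ediv_add_emod x (n:ℤ)
  linarith [this]

end GBounds

section Neck

variable {n : ℕ}

lemma fin_eq_of_dvd (c c' : Fin n) (h : (n:ℤ) ∣ ((c.val:ℤ) - c'.val)) : c = c' := by
  have hn : 0 < n := Fin.pos c
  have hN : (0:ℤ) < n := by exact_mod_cast hn
  obtain ⟨t, ht⟩ := h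
  have h1 := c.isLt
  have h2 := c'.isLt
  have h5 := mul_n_five hN t
  have heq : t * (n:ℤ) = (c.val:ℤ) - c'.val := by rw [ht]; ring
  have : (c.val:ℤ) = c'.val := by omega
  exact Fin.ext (by exact_mod_cast this)

lemma lift_val_res {π : Equiv.Perm (Fin n)} {f : Equiv.Perm ℤ} (hf : IsLift n π f)
    (c : Fin n) : ∃ k : ℤ, f ((c.val:ℤ) + 1) = ((π c).val:ℤ) + 1 + k * n := by
  have := hf.2 c
  split_ifs at this with h
  · exact ⟨0, by rw [this]; ring⟩
  · exact ⟨1, by rw [this]; ring⟩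

/-- the position of the `i`-preimage of the value `c+1`. -/
lemma symm_lift_res {ι : Equiv.Perm (Fin n)} {i : Equiv.Perm ℤ} (hi : IsLift n ι i)
    (c : Fin n) : ∃ k : ℤ, i.symm ((c.val:ℤ) + 1) = (((ι⁻¹ c).val:ℤ) + 1) + k * n := by
  obtain ⟨k, hk⟩ := lift_val_res hi (ι⁻¹ c)
  rw [show ι (ι⁻¹ c) = c from Equiv.apply_symm_apply ι c] at hk
  refine ⟨-k, ?_⟩
  apply i.injective
  rw [Equiv.apply_symm_apply, aff_add_mul hi.1, hk]
  ring

open Fin.NatCast in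
lemma necklace_eq [NeZero n] {π ι : Equiv.Perm (Fin n)} {f i : Equiv.Perm ℤ}
    (hf : IsLift n π f) (hi : IsLift n ι i)
    (hg : ∀ x : ℤ, x < i.symm (f (i x)) ∧ i.symm (f (i x)) ≤ x + n) :
    ∀ m : ℕ, neckAux n (π⁻¹ * ι) ι m =
      Finset.univ.filter (fun c : Fin n =>
        ((m:ℤ) - i.symm ((c.val:ℤ)+1)) % (n:ℤ) <
          i.symm (f ((c.val:ℤ)+1)) - i.symm ((c.val:ℤ)+1)) := by
  have hn : 0 < n := Nat.pos_of_ne_zero (NeZero.ne n)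
  have hN : (0:ℤ) < n := by exact_mod_cast hn
  -- abbreviations as plain facts
  have hQX : ∀ c : Fin n, i.symm ((c.val:ℤ)+1) < i.symm (f ((c.val:ℤ)+1)) ∧
      i.symm (f ((c.val:ℤ)+1)) ≤ i.symm ((c.val:ℤ)+1) + n := by
    intro c
    have := hg (i.symm ((c.val:ℤ)+1))
    rwa [Equiv.apply_symm_apply] at this
  have resQ : ∀ c : Fin n, ∃ k : ℤ,
      i.symm (f ((c.val:ℤ)+1)) = (((ι⁻¹ (π c)).val:ℤ) + 1) + k * n := by
    intro c
    obtain ⟨k1, hk1⟩ := lift_val_res hf c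
    obtain ⟨k2, hk2⟩ := symm_lift_res hi (π c)
    refine ⟨k1 + k2, ?_⟩
    rw [hk1, show ((π c).val:ℤ) + 1 + k1 * n = (((π c).val:ℤ) + 1) + k1 * n by ring,
      aff_add_mul (aff_symm hi.1), hk2]
    ring
  have Xinj : ∀ c c' : Fin n,
      (n:ℤ) ∣ (i.symm ((c.val:ℤ)+1) - i.symm ((c'.val:ℤ)+1)) → c = c' := by
    intro c c' hd
    obtain ⟨k, hk⟩ := symm_lift_res hi c
    obtain ⟨k', hk'⟩ := symm_lift_res hi c'
    have hd2 : (n:ℤ) ∣ (((ι⁻¹ c).val:ℤ) - ((ι⁻¹ c').val:ℤ)) := by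
      obtain ⟨t, ht⟩ := hd
      exact ⟨t - k + k', by rw [hk, hk'] at ht; linear_combination ht⟩
    have := fin_eq_of_dvd _ _ hd2
    apply ι⁻¹.injective this
  intro m
  induction m with
  | zero =>
      show Finset.univ.filter _ = _
      ext c
      simp only [Finset.mem_filter, Finset.mem_univ, true_and, Nat.cast_zero]
      obtain ⟨k, hk⟩ := symm_lift_res hi c
      obtain ⟨l, hl⟩ := resQ c
      have hb := hQX c
      have hA : ((ι⁻¹ c).val:ℤ) < n := by exact_mod_cast (ι⁻¹ c).isLt
      have hA0 : (0:ℤ) ≤ ((ι⁻¹ c).val:ℤ) := by positivity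
      have hB : ((ι⁻¹ (π c)).val:ℤ) < n := by exact_mod_cast (ι⁻¹ (π c)).isLt
      have hB0 : (0:ℤ) ≤ ((ι⁻¹ (π c)).val:ℤ) := by positivity
      have hmod : ((0:ℤ) - i.symm ((c.val:ℤ)+1)) % n = (n:ℤ) - 1 - ((ι⁻¹ c).val:ℤ) := by
        apply emod_eval hN (-k - 1)
        · rw [hk]; ring
        · omega
        · omega
      rw [hmod]
      have hrho : ((π⁻¹ * ι)⁻¹ c ≤ ι⁻¹ c) ↔
          (((ι⁻¹ (π c)).val:ℤ) ≤ ((ι⁻¹ c).val:ℤ)) := by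
        rw [show (π⁻¹ * ι)⁻¹ c = ι⁻¹ (π c) by simp [Equiv.Perm.mul_apply]]
        rw [Fin.le_def]
        exact_mod_cast Iff.rfl
      rw [hrho]
      have h5 := mul_n_five hN (l - k)
      have heq : (l - k) * (n:ℤ) =
          (i.symm (f ((c.val:ℤ)+1)) - i.symm ((c.val:ℤ)+1)) -
            (((ι⁻¹ (π c)).val:ℤ) - ((ι⁻¹ c).val:ℤ)) := by
        rw [hk, hl]; ring
      constructor <;> intro hcase <;> omega
  | succ m IH =>
      show insert (ι (m : Fin n)) ((neckAux n (π⁻¹ * ι) ι m).erase ((π⁻¹ * ι) (m : Fin n))) = _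
      rw [IH]
      ext c
      simp only [Finset.mem_insert, Finset.mem_erase, Finset.mem_filter, Finset.mem_univ,
        true_and]
      rw [show ((m+1 : ℕ):ℤ) = (m:ℤ)+1 by push_cast; ring]
      -- decompositions
      obtain ⟨q1, hq1, hE0, hE1⟩ := emod_decomp hN ((m:ℤ) - i.symm ((c.val:ℤ)+1))
      obtain ⟨q2, hq2, hE0', hE1'⟩ := emod_decomp hN ((m:ℤ)+1 - i.symm ((c.val:ℤ)+1))
      have hb := hQX c
      have hcast : (((m+1 : ℕ)):ℤ) = (m:ℤ) + 1 := by push_cast; ring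
      -- m-residue of the Fin-cast
      have hmval : ∃ j : ℤ, (((m : Fin n)).val : ℤ) = (m:ℤ) + j * n := by
        refine ⟨-((m / n : ℕ):ℤ), ?_⟩
        have h0 := Nat.mod_add_div m n
        have hv : ((m : Fin n)).val = m % n := by simp [Fin.val_natCast]
        have h2 : ((m % n : ℕ):ℤ) + (n:ℤ) * ((m / n : ℕ):ℤ) = (m:ℤ) := by exact_mod_cast h0
        rw [hv]
        linear_combination h2
      -- characterization of c = ι m̄
      have hiota : (c = ι (m : Fin n)) ↔ ((m:ℤ)+1 - i.symm ((c.val:ℤ)+1)) % n = 0 := by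
        obtain ⟨j, hj⟩ := hmval
        constructor
        · intro hc
          obtain ⟨k, hk⟩ := symm_lift_res hi c
          have hinv : (ι⁻¹ c) = (m : Fin n) := by rw [hc]; simp
          rw [hinv] at hk
          have hS : (m:ℤ)+1 - i.symm ((c.val:ℤ)+1) = (-j - k) * n := by
            rw [hk, hj]; ring
          have h5 := mul_n_five hN (-j - k - q2)
          have heq3 : (-j - k - q2) * (n:ℤ) = (-j - k) * n - q2 * n := by ring
          omega
        · intro hc
          obtain ⟨k, hk⟩ := symm_lift_res hi (ι (m : Fin n))
          have hiinv : ι⁻¹ (ι (m : Fin n)) = (m : Fin n) := by simp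
          rw [hiinv] at hk
          apply Xinj
          refine ⟨-q2 - j - k, ?_⟩
          have hS : (m:ℤ)+1 - i.symm ((c.val:ℤ)+1) = q2 * n := by omega
          rw [hk, hj]
          linear_combination -hS
      have hrho : (c = (π⁻¹ * ι) (m : Fin n)) ↔
          ((m:ℤ)+1 - i.symm (f ((c.val:ℤ)+1))) % (n:ℤ) = 0 := by
        obtain ⟨j, hj⟩ := hmval
        obtain ⟨qr, hqr, hr0, hr1⟩ := emod_decomp hN ((m:ℤ)+1 - i.symm (f ((c.val:ℤ)+1)))
        constructor
        · intro hc
          have hpc : ι⁻¹ (π c) = (m : Fin n) := by rw [hc]; simp [Equiv.Perm.mul_apply]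
          obtain ⟨l, hl⟩ := resQ c
          rw [hpc] at hl
          have hS : (m:ℤ)+1 - i.symm (f ((c.val:ℤ)+1)) = (-j - l) * n := by
            rw [hl, hj]; ring
          have h5 := mul_n_five hN (-j - l - qr)
          have heq3 : (-j - l - qr) * (n:ℤ) = (-j - l) * n - qr * n := by ring
          omega
        · intro hc
          obtain ⟨l, hl⟩ := resQ c
          have hS : (m:ℤ)+1 - i.symm (f ((c.val:ℤ)+1)) = qr * n := by omega
          have hd : (n:ℤ) ∣ (((ι⁻¹ (π c)).val:ℤ) - (((m : Fin n)).val:ℤ)) := by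
            refine ⟨-qr - j - l, ?_⟩
            rw [hj]
            linear_combination - hl - hS
          have hfin2 := fin_eq_of_dvd _ _ hd
          have h2 : π c = ι (m : Fin n) := by
            have h3 := congrArg ι hfin2
            simpa using h3
          have h4 : (π⁻¹ * ι) (m : Fin n) = π⁻¹ (ι (m : Fin n)) := rfl
          rw [h4, ← h2]
          simp
      simp only [hiota, hrho]
      obtain ⟨qr, hqr, hr0, hr1⟩ := emod_decomp hN ((m:ℤ)+1 - i.symm (f ((c.val:ℤ)+1)))
      have h5a := mul_n_five hN (q2 - q1)
      have heqa : (q2 - q1) * (n:ℤ) = 1 - (((m:ℤ)+1 - i.symm ((c.val:ℤ)+1)) % n)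
          + (((m:ℤ) - i.symm ((c.val:ℤ)+1)) % n) := by
        linear_combination hq1 - hq2
      have h5b := mul_n_five hN (q2 - qr)
      have heqb : (q2 - qr) * (n:ℤ) =
          (i.symm (f ((c.val:ℤ)+1)) - i.symm ((c.val:ℤ)+1))
          - (((m:ℤ)+1 - i.symm ((c.val:ℤ)+1)) % n)
          + (((m:ℤ)+1 - i.symm (f ((c.val:ℤ)+1))) % n) := by
        linear_combination hqr - hq2
      omega

end Neck

section Windows

variable {n : ℕ}

lemma emod_addn (hN : 0 < (n:ℤ)) (x : ℤ) : (x + (n:ℤ)) % (n:ℤ) = x % n := by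
  rw [show x + (n:ℤ) = x + 1 * n by ring, Int.add_mul_emod_self_right]

lemma window_pos (hN : 0 < (n:ℤ)) {P M vt wt : ℤ} (hM1 : 1 ≤ M) (hM2 : M ≤ n)
    (hvw : wt < vt) (hvw2 : vt < wt + n)
    (hv : (vt - 1 - P) % (n:ℤ) < M) (hw : ¬ ((wt - 1 - P) % (n:ℤ) < M)) :
    ∃ p : ℤ, (n:ℤ) ∣ p - P ∧ wt ≤ p ∧ p < vt ∧ vt ≤ p + M ∧ p + M ≤ wt + n - 1 := by
  obtain ⟨q1, hq1, h10, h11⟩ := emod_decomp hN (vt - 1 - P)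
  obtain ⟨q2, hq2, h20, h21⟩ := emod_decomp hN (wt - 1 - P)
  have h5 := mul_n_five hN (q1 - q2)
  have heq : (q1 - q2) * (n:ℤ) = (vt - wt) + ((wt - 1 - P) % n) - ((vt - 1 - P) % n) := by
    linear_combination hq2 - hq1
  refine ⟨vt - 1 - ((vt - 1 - P) % n), ⟨q1, by linear_combination hq1⟩, by omega, by omega,
    by omega, by omega⟩

lemma window_neg (hN : 0 < (n:ℤ)) {P M vt wt : ℤ} (hM1 : 1 ≤ M) (hM2 : M ≤ n)
    (hvw : wt < vt) (hvw2 : vt < wt + n)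
    (hw : (wt - 1 - P) % (n:ℤ) < M) (hv : ¬ ((vt - 1 - P) % (n:ℤ) < M)) :
    ∃ q : ℤ, (n:ℤ) ∣ q - P ∧ vt - n ≤ q ∧ q < wt ∧ wt ≤ q + M ∧ q + M ≤ vt - 1 := by
  obtain ⟨q1, hq1, h10, h11⟩ := emod_decomp hN (vt - 1 - P)
  obtain ⟨q2, hq2, h20, h21⟩ := emod_decomp hN (wt - 1 - P)
  have h5 := mul_n_five hN (q1 - q2)
  have heq : (q1 - q2) * (n:ℤ) = (vt - wt) + ((wt - 1 - P) % n) - ((vt - 1 - P) % n) := by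
    linear_combination hq2 - hq1
  refine ⟨wt - 1 - ((wt - 1 - P) % n), ⟨q2, by linear_combination hq2⟩, by omega, by omega,
    by omega, by omega⟩

/-- cyclic-order contradiction: if all eight selection options fail, contradiction. -/
lemma select_contra (hN : 0 < (n:ℤ)) {iA iB iC iD vA vB vC vD : ℤ}
    (jA jB jC jD : ℤ)
    (hA : iA = vA + jA * n) (hB : iB = vB + jB * n)
    (hC : iC = vC + jC * n) (hD : iD = vD + jD * n)
    (hc1 : 0 < (vB - vA) % (n:ℤ)) (hc2 : (vB - vA) % (n:ℤ) < (vC - vA) % n)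
    (hc3 : (vC - vA) % (n:ℤ) < (vD - vA) % n)
    (hBA1 : iB < iA) (hBA2 : iA < iB + n)
    (hBC1 : iB < iC) (hBC2 : iC < iB + n)
    (hDA1 : iD < iA) (hDA2 : iA < iD + n)
    (hDC1 : iD < iC) (hDC2 : iC < iD + n) : False := by
  rcases lt_trichotomy iA iC with hAC | hAC | hAC
  · -- iA < iC : contradiction via B
    have z1 : vB - vA = (iB - iA + n) + (jA - jB - 1) * (n:ℤ) := by linear_combination hA - hB
    have e1 : (vB - vA) % (n:ℤ) = iB - iA + n := emod_eval hN _ z1 (by omega) (by omega)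
    have z2 : vC - vA = (iC - iA) + (jA - jC) * (n:ℤ) := by linear_combination hA - hC
    have e2 : (vC - vA) % (n:ℤ) = iC - iA := emod_eval hN _ z2 (by omega) (by omega)
    omega
  · -- iA = iC impossible: (vC - vA) % n would be 0 < it
    have z2 : vC - vA = 0 + (jA - jC) * (n:ℤ) := by linear_combination hA - hC - hAC
    have e2 : (vC - vA) % (n:ℤ) = 0 := emod_eval hN _ z2 (by omega) (by omega)
    omega
  · -- iC < iA
    have hCA2 : iA - n < iC := by omega
    have z1 : vB - vA = (iB - iA + n) + (jA - jB - 1) * (n:ℤ) := by linear_combination hA - hB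
    have e1 : (vB - vA) % (n:ℤ) = iB - iA + n := emod_eval hN _ z1 (by omega) (by omega)
    have z2 : vC - vA = (iC - iA + n) + (jA - jC - 1) * (n:ℤ) := by linear_combination hA - hC
    have e2 : (vC - vA) % (n:ℤ) = iC - iA + n := emod_eval hN _ z2 (by omega) (by omega)
    have z3 : vD - vA = (iD - iA + n) + (jA - jD - 1) * (n:ℤ) := by linear_combination hA - hD
    have e3 : (vD - vA) % (n:ℤ) = iD - iA + n := emod_eval hN _ z3 (by omega) (by omega)
    omega

lemma fin_sub_val [NeZero n] (a b : Fin n) :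
    (((b - a).val : ℤ)) = ((b.val:ℤ) - a.val) % (n:ℤ) := by
  have hn : 0 < n := Nat.pos_of_ne_zero (NeZero.ne n)
  have hN : (0:ℤ) < n := by exact_mod_cast hn
  have hadd : (b - a) + a = b := sub_add_cancel b a
  have hval : ((b - a).val + a.val) % n = b.val := by
    rw [← Fin.val_add, hadd]
  have hdecomp := Nat.div_add_mod ((b - a).val + a.val) n
  rw [hval] at hdecomp
  have hcast : (((b - a).val:ℤ) + a.val) = (n:ℤ) * ((((b - a).val + a.val) / n : ℕ):ℤ) + b.val := by
    exact_mod_cast congrArg (Nat.cast : ℕ → ℤ) hdecomp.symm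
  have hz : (b.val:ℤ) - a.val = (((b - a).val:ℤ)) +
      (-((((b - a).val + a.val) / n : ℕ):ℤ)) * (n:ℤ) := by linear_combination -hcast
  exact (emod_eval hN _ hz (by positivity) (by exact_mod_cast (b - a).isLt)).symm

end Windows

section PartB

variable {n : ℕ}

lemma g_shift {f i : Equiv.Perm ℤ} (hfa : IsAffinePerm n f) (hia : IsAffinePerm n i)
    (z t : ℤ) : i.symm (f (i (z + t * n))) = i.symm (f (i z)) + t * n := by
  rw [aff_add_mul hia, aff_add_mul hfa, aff_add_mul (aff_symm hia)]

lemma g_val {f i : Equiv.Perm ℤ} (hfa : IsAffinePerm n f) (hia : IsAffinePerm n i)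
    {X : Fin n} {z : ℤ} (hd : (n:ℤ) ∣ z - i.symm (((X.val:ℤ)+1))) :
    i.symm (f (i z)) = z + (i.symm (f ((X.val:ℤ)+1)) - i.symm ((X.val:ℤ)+1)) := by
  obtain ⟨t, ht⟩ := hd
  have hz : z = i.symm ((X.val:ℤ)+1) + t * n := by linear_combination ht
  rw [hz, g_shift hfa hia, Equiv.apply_symm_apply]
  ring

lemma i_val {i : Equiv.Perm ℤ} (hia : IsAffinePerm n i)
    {X : Fin n} {z : ℤ} (hd : (n:ℤ) ∣ z - i.symm (((X.val:ℤ)+1))) :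
    ∃ j : ℤ, i z = ((X.val:ℤ)+1) + j * n := by
  obtain ⟨t, ht⟩ := hd
  have hz : z = i.symm ((X.val:ℤ)+1) + t * n := by linear_combination ht
  rw [hz, aff_add_mul hia, Equiv.apply_symm_apply]
  exact ⟨t, rfl⟩

lemma emit {f i : Equiv.Perm ℤ} (hia : IsAffinePerm n i)
    {P Q : Fin n} (hne : Q ≠ P) {x y : ℤ}
    (hxy : x < y) (hiy : i y < i x)
    (hgxy : i.symm (f (i x)) < i.symm (f (i y)))
    (hxres : ∃ j : ℤ, i x = ((Q.val:ℤ)+1) + j * n)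
    (hyres : ∃ j : ℤ, i y = ((P.val:ℤ)+1) + j * n) :
    ∃ x y : ℤ, x < y ∧ ¬ (n:ℤ) ∣ (y - x) ∧ i y < i x ∧
      i.symm (f (i x)) < i.symm (f (i y)) := by
  refine ⟨x, y, hxy, ?_, hiy, hgxy⟩
  rintro ⟨t, ht⟩
  obtain ⟨jx, hjx⟩ := hxres
  obtain ⟨jy, hjy⟩ := hyres
  have hy : y = x + t * n := by linear_combination ht
  have hiy2 : i y = i x + t * n := by rw [hy, aff_add_mul hia]
  apply hne
  apply fin_eq_of_dvd
  rw [hjx, hjy] at hiy2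
  exact ⟨jy - jx - t, by linear_combination -hiy2⟩

lemma partB [NeZero n] {π ι : Equiv.Perm (Fin n)} {f i : Equiv.Perm ℤ}
    (hf : IsLift n π f) (hi : IsLift n ι i)
    (hg : ∀ x : ℤ, x < i.symm (f (i x)) ∧ i.symm (f (i x)) ≤ x + n)
    {v w A B C D : Fin n}
    (hcyc : CyclicOrdered n A B C D)
    (hA1 : A ∈ neckAux n (π⁻¹ * ι) ι v.val) (hA2 : A ∉ neckAux n (π⁻¹ * ι) ι w.val)
    (hC1 : C ∈ neckAux n (π⁻¹ * ι) ι v.val) (hC2 : C ∉ neckAux n (π⁻¹ * ι) ι w.val)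
    (hB1 : B ∈ neckAux n (π⁻¹ * ι) ι w.val) (hB2 : B ∉ neckAux n (π⁻¹ * ι) ι v.val)
    (hD1 : D ∈ neckAux n (π⁻¹ * ι) ι w.val) (hD2 : D ∉ neckAux n (π⁻¹ * ι) ι v.val) :
    ∃ x y : ℤ, x < y ∧ ¬ (n:ℤ) ∣ (y - x) ∧ i y < i x ∧
      i.symm (f (i x)) < i.symm (f (i y)) := by
  have hn : 0 < n := Nat.pos_of_ne_zero (NeZero.ne n)
  have hN : (0:ℤ) < n := by exact_mod_cast hn
  have hvw : v ≠ w := by rintro rfl; exact hA2 hA1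
  -- rewrite memberships
  rw [necklace_eq hf hi hg, Finset.mem_filter] at hA1 hA2 hB1 hB2 hC1 hC2 hD1 hD2
  simp only [Finset.mem_univ, true_and, not_lt] at hA1 hA2 hB1 hB2 hC1 hC2 hD1 hD2
  -- windows bounds
  have hM : ∀ X : Fin n, 1 ≤ i.symm (f ((X.val:ℤ)+1)) - i.symm ((X.val:ℤ)+1) ∧
      i.symm (f ((X.val:ℤ)+1)) - i.symm ((X.val:ℤ)+1) ≤ n := by
    intro X
    have := hg (i.symm ((X.val:ℤ)+1))
    rw [Equiv.apply_symm_apply] at this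
    omega
  -- set up vt wt
  set vt : ℤ := if w.val < v.val then (v.val:ℤ)+1 else (v.val:ℤ)+1+n with hvt
  set wt : ℤ := (w.val:ℤ)+1 with hwt
  have hvv : v.val ≠ w.val := fun hc => hvw (Fin.ext hc)
  have hb1 : wt < vt ∧ vt < wt + n := by
    rw [hvt, hwt]
    split_ifs with h
    · have := v.isLt; have := w.isLt
      constructor <;> [omega; omega]
    · have hlt : v.val < w.val := by omega
      have := v.isLt; have := w.isLt
      constructor <;> [omega; omega]
  have hvmod : ∀ P : ℤ, (vt - 1 - P) % (n:ℤ) = (((v.val:ℕ):ℤ) - P) % n := by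
    intro P
    rw [hvt]
    split_ifs with h
    · rw [show (v.val:ℤ)+1 - 1 - P = ((v.val:ℕ):ℤ) - P by push_cast; ring]
    · rw [show (v.val:ℤ)+1+(n:ℤ) - 1 - P = (((v.val:ℕ):ℤ) - P) + n by push_cast; ring,
        emod_addn hN]
  have hwmod : ∀ P : ℤ, (wt - 1 - P) % (n:ℤ) = (((w.val:ℕ):ℤ) - P) % n := by
    intro P
    rw [hwt]
    rw [show (w.val:ℤ)+1 - 1 - P = ((w.val:ℕ):ℤ) - P by push_cast; ring]
  -- extract windows
  obtain ⟨pA, dA, hpA1, hpA2, hpA3, hpA4⟩ :=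
    window_pos hN (hM A).1 (hM A).2 hb1.1 hb1.2 (by rw [hvmod]; exact hA1)
      (by rw [hwmod]; omega)
  obtain ⟨pC, dC, hpC1, hpC2, hpC3, hpC4⟩ :=
    window_pos hN (hM C).1 (hM C).2 hb1.1 hb1.2 (by rw [hvmod]; exact hC1)
      (by rw [hwmod]; omega)
  obtain ⟨qB, dB, hqB1, hqB2, hqB3, hqB4⟩ :=
    window_neg hN (hM B).1 (hM B).2 hb1.1 hb1.2 (by rw [hwmod]; exact hB1)
      (by rw [hvmod]; omega)
  obtain ⟨qD, dD, hqD1, hqD2, hqD3, hqD4⟩ :=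
    window_neg hN (hM D).1 (hM D).2 hb1.1 hb1.2 (by rw [hwmod]; exact hD1)
      (by rw [hvmod]; omega)
  -- g-values at windows
  have gA := g_val hf.1 hi.1 dA
  have gC := g_val hf.1 hi.1 dC
  have gB := g_val hf.1 hi.1 dB
  have gD := g_val hf.1 hi.1 dD
  -- i-values
  obtain ⟨jA, hjA⟩ := i_val hi.1 dA
  obtain ⟨jC, hjC⟩ := i_val hi.1 dC
  obtain ⟨jB, hjB⟩ := i_val hi.1 dB
  obtain ⟨jD, hjD⟩ := i_val hi.1 dD
  -- distinctness
  obtain ⟨hcy1, hcy2, hcy3⟩ := hcyc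
  have hBA : B ≠ A := by
    intro hc
    have : cPos n A B = 0 := by rw [hc]; simp [cPos]
    omega
  have hDA : D ≠ A := by
    intro hc
    have : cPos n A D = 0 := by rw [hc]; simp [cPos]
    omega
  have hBC : B ≠ C := by
    intro hc
    rw [hc] at hcy2
    omega
  have hDC : D ≠ C := by
    intro hc
    rw [hc] at hcy3
    omega
  -- residue distinctness: i-values of different classes are never congruent
  have hresne : ∀ (P Q : Fin n) (jP jQ u1 u2 : ℤ), Q ≠ P →
      u1 = ((P.val:ℤ)+1) + jP * n → u2 = ((Q.val:ℤ)+1) + jQ * n →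
      ∀ t : ℤ, u1 ≠ u2 + t * n := by
    intro P Q jP jQ u1 u2 hne h1 h2 t hc
    apply hne
    apply fin_eq_of_dvd
    refine ⟨jP - jQ - t, ?_⟩
    rw [h1, h2] at hc
    linear_combination -hc
  -- the eight-way selection
  by_cases s1 : i pA < i qB
  · exact emit hi.1 hBA (hqB2.trans_le hpA1) s1 (by omega) ⟨jB, hjB⟩ ⟨jA, hjA⟩
  by_cases s2 : i qB + n < i pA
  · have hyval : i (qB + (n:ℤ)) = i qB + n := by
      have h1 := aff_add_mul hi.1 qB 1
      rw [show qB + 1 * (n:ℤ) = qB + n by ring] at h1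
      rw [h1]; ring
    refine emit hi.1 hBA.symm (x := pA) (y := qB + n) (by omega) (by omega) ?_
      ⟨jA, hjA⟩ ⟨jB + 1, by rw [hyval, hjB]; ring⟩
    rw [show qB + (n:ℤ) = qB + 1 * n by ring, g_shift hf.1 hi.1]
    omega
  by_cases s3 : i pA < i qD
  · exact emit hi.1 hDA (hqD2.trans_le hpA1) s3 (by omega) ⟨jD, hjD⟩ ⟨jA, hjA⟩
  by_cases s4 : i qD + n < i pA
  · have hyval : i (qD + (n:ℤ)) = i qD + n := by
      have h1 := aff_add_mul hi.1 qD 1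
      rw [show qD + 1 * (n:ℤ) = qD + n by ring] at h1
      rw [h1]; ring
    refine emit hi.1 hDA.symm (x := pA) (y := qD + n) (by omega) (by omega) ?_
      ⟨jA, hjA⟩ ⟨jD + 1, by rw [hyval, hjD]; ring⟩
    rw [show qD + (n:ℤ) = qD + 1 * n by ring, g_shift hf.1 hi.1]
    omega
  by_cases s5 : i pC < i qB
  · exact emit hi.1 hBC (hqB2.trans_le hpC1) s5 (by omega) ⟨jB, hjB⟩ ⟨jC, hjC⟩
  by_cases s6 : i qB + n < i pC
  · have hyval : i (qB + (n:ℤ)) = i qB + n := by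
      have h1 := aff_add_mul hi.1 qB 1
      rw [show qB + 1 * (n:ℤ) = qB + n by ring] at h1
      rw [h1]; ring
    refine emit hi.1 hBC.symm (x := pC) (y := qB + n) (by omega) (by omega) ?_
      ⟨jC, hjC⟩ ⟨jB + 1, by rw [hyval, hjB]; ring⟩
    rw [show qB + (n:ℤ) = qB + 1 * n by ring, g_shift hf.1 hi.1]
    omega
  by_cases s7 : i pC < i qD
  · exact emit hi.1 hDC (hqD2.trans_le hpC1) s7 (by omega) ⟨jD, hjD⟩ ⟨jC, hjC⟩
  by_cases s8 : i qD + n < i pC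
  · have hyval : i (qD + (n:ℤ)) = i qD + n := by
      have h1 := aff_add_mul hi.1 qD 1
      rw [show qD + 1 * (n:ℤ) = qD + n by ring] at h1
      rw [h1]; ring
    refine emit hi.1 hDC.symm (x := pC) (y := qD + n) (by omega) (by omega) ?_
      ⟨jC, hjC⟩ ⟨jD + 1, by rw [hyval, hjD]; ring⟩
    rw [show qD + (n:ℤ) = qD + 1 * n by ring, g_shift hf.1 hi.1]
    omega
  -- all fail: contradiction
  exfalso
  have ne1 := hresne A B jA jB (i pA) (i qB) hBA hjA hjB
  have ne2 := hresne A D jA jD (i pA) (i qD) hDA hjA hjD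
  have ne3 := hresne C B jC jB (i pC) (i qB) hBC hjC hjB
  have ne4 := hresne C D jC jD (i pC) (i qD) hDC hjC hjD
  have f1 : i qB < i pA ∧ i pA < i qB + n := by
    have h0 := ne1 0
    have h1 := ne1 1
    simp only [zero_mul, one_mul, add_zero] at h0 h1
    omega
  have f2 : i qD < i pA ∧ i pA < i qD + n := by
    have h0 := ne2 0
    have h1 := ne2 1
    simp only [zero_mul, one_mul, add_zero] at h0 h1
    omega
  have f3 : i qB < i pC ∧ i pC < i qB + n := by
    have h0 := ne3 0
    have h1 := ne3 1
    simp only [zero_mul, one_mul, add_zero] at h0 h1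
    omega
  have f4 : i qD < i pC ∧ i pC < i qD + n := by
    have h0 := ne4 0
    have h1 := ne4 1
    simp only [zero_mul, one_mul, add_zero] at h0 h1
    omega
  -- cyclic conditions in ℤ
  have hcz1 : 0 < (((B.val:ℤ)+1) - ((A.val:ℤ)+1)) % (n:ℤ) := by
    rw [show ((B.val:ℤ)+1) - ((A.val:ℤ)+1) = (B.val:ℤ) - A.val by ring, ← fin_sub_val]
    exact_mod_cast hcy1
  have hcz2 : (((B.val:ℤ)+1) - ((A.val:ℤ)+1)) % (n:ℤ) <
      (((C.val:ℤ)+1) - ((A.val:ℤ)+1)) % (n:ℤ) := by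
    rw [show ((B.val:ℤ)+1) - ((A.val:ℤ)+1) = (B.val:ℤ) - A.val by ring,
      show ((C.val:ℤ)+1) - ((A.val:ℤ)+1) = (C.val:ℤ) - A.val by ring,
      ← fin_sub_val, ← fin_sub_val]
    exact_mod_cast hcy2
  have hcz3 : (((C.val:ℤ)+1) - ((A.val:ℤ)+1)) % (n:ℤ) <
      (((D.val:ℤ)+1) - ((A.val:ℤ)+1)) % (n:ℤ) := by
    rw [show ((C.val:ℤ)+1) - ((A.val:ℤ)+1) = (C.val:ℤ) - A.val by ring,
      show ((D.val:ℤ)+1) - ((A.val:ℤ)+1) = (D.val:ℤ) - A.val by ring,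
      ← fin_sub_val, ← fin_sub_val]
    exact_mod_cast hcy3
  exact select_contra hN jA jB jC jD hjA hjB hjC hjD hcz1 hcz2 hcz3
    f1.1 f1.2 f3.1 f3.2 f2.1 f2.2 f4.1 f4.2

end PartB

/-- If the Grassmannlike necklace `𝓘_{•,ι,π}` is not weakly separated, then
(with `r = f⁻¹·i`) there is an affine transposition `t` with `ℓ(t·r) < ℓ(r)` and
`ℓ(t·i) < ℓ(i)`. -/
theorem not_weakly_separated_gives_common_left_reflection
    (n k : ℕ) [NeZero n] (π ι : Equiv.Perm (Fin n)) (f i : Equiv.Perm ℤ)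
    (hπ : IsType k n π) (hι : IsType k n ι)
    (hf : IsLift n π f) (hfB : f ∈ Bound k n)
    (hi : IsLift n ι i) (hiB : i ∈ Bound k n)
    (hle : LeR n i f)
    (hns : ¬ ∀ a b : Fin n,
        WeaklySeparated n (necklace n (π⁻¹ * ι) ι a) (necklace n (π⁻¹ * ι) ι b)) :
    ∃ t : Equiv.Perm ℤ, IsAffTransp n t ∧
      aLen n (t * (f⁻¹ * i)) < aLen n (f⁻¹ * i) ∧
      aLen n (t * i) < aLen n i := by
  classical
  have hn : 0 < n := Nat.pos_of_ne_zero (NeZero.ne n)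
  have hN : (0:ℤ) < n := by exact_mod_cast hn
  obtain ⟨hfa', hfb, -⟩ := hfB
  obtain ⟨hia', hib, -⟩ := hiB
  have hle' : aLen n f = aLen n i + aLen n (i⁻¹ * f) := hle
  have hg := g_bounds hn hf.1 hi.1 hfb hib hle'
  -- extract the quadruple
  obtain ⟨va, hva⟩ := not_forall.mp hns
  obtain ⟨wb, hwb⟩ := not_forall.mp hva
  rw [WeaklySeparated, not_not] at hwb
  obtain ⟨A, B, C, D, hcyc, m1, m2, m3, m4, m5, m6, m7, m8⟩ := hwb
  obtain ⟨x, y, hxy, hnd, hiy, hgy⟩ := partB hf hi hg hcyc m1 m2 m3 m4 m5 m6 m7 m8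
  set α := i y with hα
  set β := i x with hβ
  have hndv : ¬ (n:ℤ) ∣ β - α := by
    rintro ⟨s, hs⟩
    apply hnd
    have hix : β = i (y + s * n) := by
      rw [aff_add_mul hi.1]
      linear_combination hs + hα
    rw [hβ] at hix
    have h2 := i.injective hix
    exact ⟨-s, by rw [h2]; ring⟩
  -- the transposition
  set tf : ℤ → ℤ := fun z =>
    if (n:ℤ) ∣ z - α then z - α + β else if (n:ℤ) ∣ z - β then z - β + α else z with htf
  have hexcl : ∀ z : ℤ, (n:ℤ) ∣ z - α → (n:ℤ) ∣ z - β → False := by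
    intro z h1 h2
    exact hndv (by rw [show β - α = (z - α) - (z - β) by ring]; exact h1.sub h2)
  have hinvol : Function.Involutive tf := by
    intro z
    by_cases h1 : (n:ℤ) ∣ z - α
    · have e1 : tf z = z - α + β := by rw [htf]; simp only; rw [if_pos h1]
      have c1 : ¬ (n:ℤ) ∣ (z - α + β) - α := by
        intro hc
        exact hndv (by
          have := hc.sub h1
          rwa [show (z - α + β) - α - (z - α) = β - α by ring] at this)
      have c2 : (n:ℤ) ∣ (z - α + β) - β := by rwa [show (z - α + β) - β = z - α by ring]
      rw [e1, htf]; simp only; rw [if_neg c1, if_pos c2]; ring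
    · by_cases h2 : (n:ℤ) ∣ z - β
      · have e1 : tf z = z - β + α := by rw [htf]; simp only; rw [if_neg h1, if_pos h2]
        have c1 : (n:ℤ) ∣ (z - β + α) - α := by rwa [show (z - β + α) - α = z - β by ring]
        rw [e1, htf]; simp only; rw [if_pos c1]; ring
      · have e1 : tf z = z := by rw [htf]; simp only; rw [if_neg h1, if_neg h2]
        rw [e1, htf]; simp only; rw [if_neg h1, if_neg h2]
  set t : Equiv.Perm ℤ := hinvol.toPerm with htdef
  have htapp : ∀ z : ℤ, t z = tf z := fun z => rfl
  have ht : IsAffTranspAt n α β t := by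
    refine ⟨hndv, fun z => ⟨?_, ?_, ?_⟩⟩
    · intro hd
      rw [htapp, htf]; simp only; rw [if_pos hd]
    · intro hd
      by_cases h1 : (n:ℤ) ∣ z - α
      · exact absurd hd (fun _ => hexcl z h1 hd)
      · rw [htapp, htf]; simp only; rw [if_neg h1, if_pos hd]
    · intro h1 h2
      rw [htapp, htf]; simp only; rw [if_neg h1, if_neg h2]
  refine ⟨t, ⟨α, β, ht⟩, ?_, ?_⟩
  · -- decrease for r = f⁻¹ * i
    have hra : IsAffinePerm n (f⁻¹ * i) := aff_mul (aff_inv hf.1) hi.1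
    have hrB : ∀ z : ℤ, |(f⁻¹ * i) z - z| ≤ (n:ℤ) := by
      intro z
      have h1 := hib z
      have h2 := perm_symm_bounds hfb (i z)
      have : (f⁻¹ * i) z = f.symm (i z) := rfl
      rw [this, abs_le]
      omega
    set gx := i.symm (f (i x)) with hgx
    set gy := i.symm (f (i y)) with hgyy
    have e1 : (f⁻¹ * i) gy = α := by
      show f.symm (i (i.symm (f (i y)))) = α
      rw [Equiv.apply_symm_apply, Equiv.symm_apply_apply]
    have e2 : (f⁻¹ * i) gx = β := by
      show f.symm (i (i.symm (f (i x)))) = β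
      rw [Equiv.apply_symm_apply, Equiv.symm_apply_apply]
    have hnd2 : ¬ (n:ℤ) ∣ gy - gx := by
      rintro ⟨s, hs⟩
      apply hndv
      have hgy2 : gy = gx + s * n := by linarith [hs]
      have : i gy = i gx + s * n := by rw [hgy2, aff_add_mul hi.1]
      rw [hgx, hgyy, Equiv.apply_symm_apply, Equiv.apply_symm_apply] at this
      have hfy : f (i y) = f (i x + s * n) := by rw [aff_add_mul hf.1]; exact this
      have := f.injective hfy
      exact ⟨-s, by omega⟩
    exact aLen_transp_mul_lt hn hra (n:ℤ) hrB hgy hnd2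
      (by rw [e1, e2]; exact hiy) (by rw [e1, e2]; exact ht)
  · -- decrease for i
    have hiB2 : ∀ z : ℤ, |i z - z| ≤ (n:ℤ) := by
      intro z
      have := hib z
      rw [abs_le]
      omega
    exact aLen_transp_mul_lt hn hi.1 (n:ℤ) hiB2 hxy hnd hiy ht
end

section
/- Let π be a permutation of {1,…,n} of type (k,n) with lift f ∈ Bound(k,n). Suppose that either (a) π has exactly one descent, i.e. exactly one position a with π(a) > π(a+1), and π(b) ≠ b for all b ≤ a (so that the open positroid variety of π is an open Schubert variety), or (b) the values 1,…,k appear in increasing order in π, the values k+1,…,n appear in increasing order in π, and π(b) ≠ b whenever π(b) ∈ {k+1,…,n} (open opposite Schubert variety). Then for every permutation ι of type (k,n) with ι ≤_∘ π and lift i ∈ Bound(k,n), one has ℓ(i⁻¹·f·i) = ℓ(f). -/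
open Finset

/-- `π` has a descent at position `a` (0-indexed). -/
def DescentAt (n : ℕ) (π : Equiv.Perm (Fin n)) (a : ℕ) : Prop :=
  ∃ h : a + 1 < n, π ⟨a + 1, h⟩ < π ⟨a, Nat.lt_of_succ_lt h⟩

namespace SchubAux

/-- block index of `z`: the unique `m` with `n*m+1 ≤ z ≤ n*m+n`. -/
def blk (n : ℕ) (z : ℤ) : ℤ := (z - 1) / (n : ℤ)

lemma blk_spec (n : ℕ) (hn : 0 < n) (z : ℤ) :
    (n : ℤ) * blk n z + 1 ≤ z ∧ z ≤ (n : ℤ) * blk n z + n := by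
  have hN : (0:ℤ) < (n:ℤ) := by exact_mod_cast hn
  have h := Int.mul_ediv_add_emod (z - 1) (n : ℤ)
  have h1 : 0 ≤ (z - 1) % (n : ℤ) := Int.emod_nonneg _ (by omega)
  have h2 : (z - 1) % (n : ℤ) < (n : ℤ) := Int.emod_lt_of_pos _ hN
  unfold blk
  constructor <;> linarith

lemma blk_unique (n : ℕ) (hn : 0 < n) (z m : ℤ)
    (h1 : (n : ℤ) * m + 1 ≤ z) (h2 : z ≤ (n : ℤ) * m + n) : blk n z = m := by
  have hN : (0:ℤ) < (n:ℤ) := by exact_mod_cast hn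
  obtain ⟨a, b⟩ := blk_spec n hn z
  rcases lt_trichotomy (blk n z) m with h | h | h
  · have : (n:ℤ) * (blk n z + 1) ≤ (n:ℤ) * m := by
      apply mul_le_mul_of_nonneg_left (by omega) (by omega)
    have e : (n:ℤ) * (blk n z + 1) = (n:ℤ) * blk n z + n := by ring
    linarith
  · exact h
  · have : (n:ℤ) * (m + 1) ≤ (n:ℤ) * blk n z := by
      apply mul_le_mul_of_nonneg_left (by omega) (by omega)
    have e : (n:ℤ) * (m + 1) = (n:ℤ) * m + n := by ring
    linarith

lemma blk_add (n : ℕ) (hn : 0 < n) (z m : ℤ) : blk n (z + n * m) = blk n z + m := by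
  obtain ⟨a, b⟩ := blk_spec n hn z
  apply blk_unique n hn _ _ (by linarith [show (n:ℤ)*(blk n z + m) = (n:ℤ)*blk n z + n*m from by ring])
    (by linarith [show (n:ℤ)*(blk n z + m) = (n:ℤ)*blk n z + n*m from by ring])

lemma blk_zero_iff (n : ℕ) (hn : 0 < n) (z : ℤ) : blk n z = 0 ↔ 1 ≤ z ∧ z ≤ n := by
  constructor
  · intro h
    obtain ⟨a, b⟩ := blk_spec n hn z
    rw [h] at a b
    constructor <;> linarith
  · intro ⟨h1, h2⟩
    exact blk_unique n hn z 0 (by linarith) (by linarith)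

lemma blk_mono (n : ℕ) (hn : 0 < n) {z w : ℤ} (h : z ≤ w) : blk n z ≤ blk n w := by
  by_contra hc
  push_neg at hc
  obtain ⟨a, b⟩ := blk_spec n hn z
  obtain ⟨c, d⟩ := blk_spec n hn w
  have : (n:ℤ) * (blk n w + 1) ≤ (n:ℤ) * blk n z := by
    apply mul_le_mul_of_nonneg_left (by omega) (by positivity)
  have e : (n:ℤ) * (blk n w + 1) = (n:ℤ) * blk n w + n := by ring
  linarith

lemma blk_ge (n : ℕ) (hn : 0 < n) {z : ℤ} {m : ℤ} (h : m ≤ blk n z) : (n:ℤ) * m + 1 ≤ z := by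
  obtain ⟨a, _⟩ := blk_spec n hn z
  have : (n:ℤ) * m ≤ (n:ℤ) * blk n z := mul_le_mul_of_nonneg_left h (by positivity)
  linarith

lemma ncard_bij {A B : Set (ℤ × ℤ)} (h : ℤ × ℤ → ℤ × ℤ) (hinj : Set.InjOn h A)
    (him : h '' A = B) : A.ncard = B.ncard := by
  rw [← him, Set.ncard_image_of_injOn hinj]

lemma renorm (n : ℕ) (hn : 0 < n) (P : ℤ × ℤ → Prop) (φ ψ : ℤ × ℤ → ℤ)
    (hP : ∀ p m, P p → P (p.1 + n * m, p.2 + n * m))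
    (hφ : ∀ p m, φ (p.1 + n * m, p.2 + n * m) = φ p + n * m)
    (hψ : ∀ p m, ψ (p.1 + n * m, p.2 + n * m) = ψ p + n * m) :
    {p : ℤ × ℤ | P p ∧ blk n (φ p) = 0}.ncard = {p : ℤ × ℤ | P p ∧ blk n (ψ p) = 0}.ncard := by
  apply ncard_bij (fun p => (p.1 + n * (-(blk n (ψ p))), p.2 + n * (-(blk n (ψ p)))))
  · rintro p ⟨hp, hp0⟩ q ⟨hq, hq0⟩ heq
    set bp := blk n (ψ p) with hbp
    set bq := blk n (ψ q) with hbq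
    have h1 : p.1 + n * (-bp) = q.1 + n * (-bq) := congrArg Prod.fst heq
    have h2 : p.2 + n * (-bp) = q.2 + n * (-bq) := congrArg Prod.snd heq
    have hq1 : p.1 = q.1 + n * (bp - bq) := by linarith [show (n:ℤ)*(bp-bq) = n*bp - n*bq from by ring, show (n:ℤ)*(-bp) = -(n*bp) from by ring, show (n:ℤ)*(-bq) = -(n*bq) from by ring]
    have hq2 : p.2 = q.2 + n * (bp - bq) := by linarith [show (n:ℤ)*(bp-bq) = n*bp - n*bq from by ring, show (n:ℤ)*(-bp) = -(n*bp) from by ring, show (n:ℤ)*(-bq) = -(n*bq) from by ring]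
    have hpq : p = (q.1 + n * (bp - bq), q.2 + n * (bp - bq)) := Prod.ext hq1 hq2
    have hφp : φ p = φ q + n * (bp - bq) := by rw [hpq]; exact hφ q _
    have hblk : blk n (φ p) = blk n (φ q) + (bp - bq) := by rw [hφp, blk_add n hn]
    have hbpq : bp - bq = 0 := by omega
    rw [hpq, hbpq]
    simp
  · ext q
    constructor
    · rintro ⟨p, ⟨hp, hp0⟩, rfl⟩
      refine ⟨hP p _ hp, ?_⟩
      have := hψ p (-(blk n (ψ p)))
      rw [this, show ψ p + (n:ℤ) * (-(blk n (ψ p))) = ψ p + n * (-(blk n (ψ p))) from rfl]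
      rw [blk_add n hn]
      omega
    · rintro ⟨hq, hq0⟩
      set r : ℤ × ℤ := (q.1 + n * (-(blk n (φ q))), q.2 + n * (-(blk n (φ q)))) with hr
      have hrP : P r := hP q _ hq
      have hrφ : blk n (φ r) = 0 := by
        have := hφ q (-(blk n (φ q)))
        rw [hr, this, blk_add n hn]
        omega
      have hrψ : blk n (ψ r) = -(blk n (φ q)) := by
        have := hψ q (-(blk n (φ q)))
        rw [hr, this, blk_add n hn, hq0]
        ring
      refine ⟨r, ⟨hrP, hrφ⟩, ?_⟩
      show (r.1 + (n:ℤ) * (-(blk n (ψ r))), r.2 + (n:ℤ) * (-(blk n (ψ r)))) = q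
      rw [hrψ, hr]
      ext
      · show q.1 + (n:ℤ) * (-(blk n (φ q))) + (n:ℤ) * (-(-(blk n (φ q)))) = q.1
        ring
      · show q.2 + (n:ℤ) * (-(blk n (φ q))) + (n:ℤ) * (-(-(blk n (φ q)))) = q.2
        ring

lemma fin_box (A : Set (ℤ × ℤ)) (L U : ℤ)
    (h : ∀ p ∈ A, L ≤ p.1 ∧ p.1 ≤ U ∧ L ≤ p.2 ∧ p.2 ≤ U) : A.Finite := by
  apply Set.Finite.subset ((Set.finite_Icc L U).prod (Set.finite_Icc L U))
  rintro p hp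
  obtain ⟨h1, h2, h3, h4⟩ := h p hp
  exact ⟨⟨h1, h2⟩, ⟨h3, h4⟩⟩


lemma affine_shift (n : ℕ) (g : Equiv.Perm ℤ) (hg : ∀ a : ℤ, g (a + n) = g a + n) :
    ∀ z m : ℤ, g (z + n * m) = g z + n * m := by
  intro z m
  induction m using Int.induction_on with
  | zero => simp
  | succ j ih =>
      have e : z + (n : ℤ) * ((j : ℤ) + 1) = (z + n * j) + n := by ring
      rw [e, hg, ih]; ring
  | pred j ih =>
      have e : z + (n : ℤ) * (-(j : ℤ) - 1) + n = z + n * (-(j : ℤ)) := by ring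
      have h2 := hg (z + n * (-(j : ℤ) - 1))
      rw [e, ih] at h2
      have e2 : (n : ℤ) * (-(j : ℤ) - 1) = n * (-(j : ℤ)) - n := by ring
      linarith

lemma affine_inv (n : ℕ) (g : Equiv.Perm ℤ) (hg : ∀ a : ℤ, g (a + n) = g a + n) :
    ∀ a : ℤ, g⁻¹ (a + n) = g⁻¹ a + n := by
  intro a
  apply g.injective
  rw [Equiv.Perm.apply_inv_self]
  have h := hg (g⁻¹ a)
  rw [Equiv.Perm.apply_inv_self] at h
  rw [h]

lemma inv_bounds (n : ℕ) (g : Equiv.Perm ℤ) (hgb : ∀ a : ℤ, a < g a ∧ g a ≤ a + n) :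
    ∀ z : ℤ, z - n ≤ g⁻¹ z ∧ g⁻¹ z < z := by
  intro z
  obtain ⟨h1, h2⟩ := hgb (g⁻¹ z)
  rw [Equiv.Perm.apply_inv_self] at h1 h2
  omega

theorem main_count (n : ℕ) (hn : 0 < n) (f i : Equiv.Perm ℤ)
    (hfA : ∀ a : ℤ, f (a + n) = f a + n) (hiA : ∀ a : ℤ, i (a + n) = i a + n)
    (hfb : ∀ a : ℤ, a < f a ∧ f a ≤ a + n) (hib : ∀ a : ℤ, a < i a ∧ i a ≤ a + n)
    (hLeR : aLen n f = aLen n i + aLen n (i⁻¹ * f))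
    (hKey : ∀ x y : ℤ, x < y → blk n x = 0 → f y < f x → f⁻¹ y < f⁻¹ x → False) :
    aLen n (i⁻¹ * f * i) = aLen n f := by
  have hN : (1 : ℤ) ≤ (n : ℤ) := by exact_mod_cast hn
  have fS : ∀ z m : ℤ, f (z + n * m) = f z + n * m := affine_shift n f hfA
  have iS : ∀ z m : ℤ, i (z + n * m) = i z + n * m := affine_shift n i hiA
  have fiS : ∀ z m : ℤ, f⁻¹ (z + n * m) = f⁻¹ z + n * m :=
    affine_shift n f⁻¹ (affine_inv n f hfA)
  have iiS : ∀ z m : ℤ, i⁻¹ (z + n * m) = i⁻¹ z + n * m :=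
    affine_shift n i⁻¹ (affine_inv n i hiA)
  have hfb' : ∀ z : ℤ, z - n ≤ f⁻¹ z ∧ f⁻¹ z < z := inv_bounds n f hfb
  have hib' : ∀ z : ℤ, z - n ≤ i⁻¹ z ∧ i⁻¹ z < z := inv_bounds n i hib
  -- the sets
  set SF : Set (ℤ × ℤ) := {p | (p.1 < p.2 ∧ f p.2 < f p.1) ∧ blk n p.1 = 0} with hSF
  set SD : Set (ℤ × ℤ) := {p | (p.1 < p.2 ∧ i⁻¹ (f p.2) < i⁻¹ (f p.1)) ∧ blk n p.1 = 0} with hSD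
  set SI : Set (ℤ × ℤ) := {p | (p.1 < p.2 ∧ i⁻¹ p.2 < i⁻¹ p.1) ∧ blk n p.1 = 0} with hSI
  set SA : Set (ℤ × ℤ) :=
    {p | (p.1 < p.2 ∧ f p.2 < f p.1 ∧ i⁻¹ (f p.2) < i⁻¹ (f p.1)) ∧ blk n p.1 = 0} with hSA
  set SB : Set (ℤ × ℤ) :=
    {p | (p.1 < p.2 ∧ f p.1 < f p.2 ∧ i⁻¹ (f p.2) < i⁻¹ (f p.1)) ∧ blk n p.1 = 0} with hSB
  set SFE : Set (ℤ × ℤ) :=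
    {p | (p.1 < p.2 ∧ f p.2 < f p.1 ∧ i⁻¹ (f p.1) < i⁻¹ (f p.2)) ∧ blk n p.1 = 0} with hSFE
  set SI1 : Set (ℤ × ℤ) :=
    {p | (p.1 < p.2 ∧ i⁻¹ p.2 < i⁻¹ p.1 ∧ f⁻¹ p.1 < f⁻¹ p.2) ∧ blk n p.1 = 0} with hSI1
  set SI2 : Set (ℤ × ℤ) :=
    {p | (p.1 < p.2 ∧ i⁻¹ p.2 < i⁻¹ p.1 ∧ f⁻¹ p.2 < f⁻¹ p.1) ∧ blk n p.1 = 0} with hSI2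
  -- finiteness
  have finSF : SF.Finite := by
    apply fin_box _ 1 (5 * n)
    rintro p ⟨⟨h1, h2⟩, h3⟩
    rw [blk_zero_iff n hn] at h3
    have b1 := hfb p.1; have b2 := hfb p.2
    refine ⟨by omega, by omega, by omega, by omega⟩
  have finSD : SD.Finite := by
    apply fin_box _ 1 (5 * n)
    rintro p ⟨⟨h1, h2⟩, h3⟩
    rw [blk_zero_iff n hn] at h3
    have b1 := hfb p.1; have b2 := hfb p.2
    have c1 := hib' (f p.1); have c2 := hib' (f p.2)
    refine ⟨by omega, by omega, by omega, by omega⟩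
  have finSI : SI.Finite := by
    apply fin_box _ 1 (5 * n)
    rintro p ⟨⟨h1, h2⟩, h3⟩
    rw [blk_zero_iff n hn] at h3
    have c1 := hib' p.1; have c2 := hib' p.2
    refine ⟨by omega, by omega, by omega, by omega⟩
  have finSA : SA.Finite := finSD.subset (by rintro p ⟨⟨h1, h2, h3⟩, h4⟩; exact ⟨⟨h1, h3⟩, h4⟩)
  have finSB : SB.Finite := finSD.subset (by rintro p ⟨⟨h1, h2, h3⟩, h4⟩; exact ⟨⟨h1, h3⟩, h4⟩)
  have finSFE : SFE.Finite := finSF.subset (by rintro p ⟨⟨h1, h2, h3⟩, h4⟩; exact ⟨⟨h1, h2⟩, h4⟩)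
  have finSI1 : SI1.Finite := finSI.subset (by rintro p ⟨⟨h1, h2, h3⟩, h4⟩; exact ⟨⟨h1, h2⟩, h4⟩)
  have finSI2 : SI2.Finite := finSI.subset (by rintro p ⟨⟨h1, h2, h3⟩, h4⟩; exact ⟨⟨h1, h2⟩, h4⟩)
  -- (1) aLen f
  have e1 : aLen n f = SF.ncard := by
    unfold aLen
    congr 1
    ext p
    simp only [hSF, Set.mem_setOf_eq]
    rw [blk_zero_iff n hn]
    tauto
  -- (2) aLen (i⁻¹ * f)
  have e2 : aLen n (i⁻¹ * f) = SD.ncard := by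
    unfold aLen
    congr 1
    ext p
    simp only [hSD, Set.mem_setOf_eq, Equiv.Perm.mul_apply]
    rw [blk_zero_iff n hn]
    tauto
  -- (3) aLen i
  have e3 : aLen n i = SI.ncard := by
    unfold aLen
    have step1 : {p : ℤ × ℤ | 1 ≤ p.1 ∧ p.1 ≤ (n : ℤ) ∧ p.1 < p.2 ∧ i p.2 < i p.1}.ncard
        = {p : ℤ × ℤ | (p.1 < p.2 ∧ i⁻¹ p.2 < i⁻¹ p.1) ∧ blk n (i⁻¹ p.2) = 0}.ncard := by
      apply ncard_bij (fun p => (i p.2, i p.1))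
      · intro p hp q hq hpq
        have h1 : i p.2 = i q.2 := congrArg Prod.fst hpq
        have h2 : i p.1 = i q.1 := congrArg Prod.snd hpq
        exact Prod.ext (i.injective h2) (i.injective h1)
      · ext q
        constructor
        · rintro ⟨p, ⟨h1, h2, h3, h4⟩, rfl⟩
          refine ⟨⟨h4, ?_⟩, ?_⟩
          · simp only [Equiv.Perm.inv_apply_self]; exact h3
          · simp only [Equiv.Perm.inv_apply_self]
            rw [blk_zero_iff n hn]; exact ⟨h1, h2⟩
        · rintro ⟨⟨h1, h2⟩, h3⟩
          rw [blk_zero_iff n hn] at h3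
          refine ⟨(i⁻¹ q.2, i⁻¹ q.1), ⟨h3.1, h3.2, h2, ?_⟩, ?_⟩
          · simp only [Equiv.Perm.apply_inv_self]; exact h1
          · simp only [Equiv.Perm.apply_inv_self]
    rw [step1]
    have := renorm n hn (fun p => p.1 < p.2 ∧ i⁻¹ p.2 < i⁻¹ p.1)
      (fun p => i⁻¹ p.2) (fun p => p.1)
      (by
        rintro p m ⟨h1, h2⟩
        refine ⟨by omega, ?_⟩
        simp only
        rw [iiS, iiS]
        omega)
      (by intro p m; simp only; rw [iiS])
      (by intro p m; simp only)
    exact this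
  -- (4) SI splits
  have e4 : SI.ncard = SI1.ncard + SI2.ncard := by
    have hu : SI = SI1 ∪ SI2 := by
      ext p
      simp only [hSI, hSI1, hSI2, Set.mem_setOf_eq, Set.mem_union]
      constructor
      · rintro ⟨⟨h1, h2⟩, h3⟩
        rcases lt_trichotomy (f⁻¹ p.1) (f⁻¹ p.2) with h | h | h
        · exact Or.inl ⟨⟨h1, h2, h⟩, h3⟩
        · exact absurd (f⁻¹.injective h) (by omega)
        · exact Or.inr ⟨⟨h1, h2, h⟩, h3⟩
      · rintro (⟨⟨h1, h2, _⟩, h3⟩ | ⟨⟨h1, h2, _⟩, h3⟩) <;> exact ⟨⟨h1, h2⟩, h3⟩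
    rw [hu, Set.ncard_union_eq ?_ finSI1 finSI2]
    rw [Set.disjoint_left]
    rintro p ⟨⟨_, _, h⟩, _⟩ ⟨⟨_, _, h'⟩, _⟩
    omega
  -- (5) SB ↔ SI1
  have e5 : SB.ncard = SI1.ncard := by
    have step1 : SB.ncard
        = {p : ℤ × ℤ | (p.1 < p.2 ∧ i⁻¹ p.2 < i⁻¹ p.1 ∧ f⁻¹ p.1 < f⁻¹ p.2) ∧ blk n (f⁻¹ p.1) = 0}.ncard := by
      apply ncard_bij (fun p => (f p.1, f p.2))
      · intro p hp q hq hpq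
        have h1 : f p.1 = f q.1 := congrArg Prod.fst hpq
        have h2 : f p.2 = f q.2 := congrArg Prod.snd hpq
        exact Prod.ext (f.injective h1) (f.injective h2)
      · ext q
        constructor
        · rintro ⟨p, ⟨⟨h1, h2, h3⟩, h4⟩, rfl⟩
          simp only [Set.mem_setOf_eq, Equiv.Perm.inv_apply_self]
          exact ⟨⟨h2, h3, h1⟩, h4⟩
        · rintro ⟨⟨h1, h2, h3⟩, h4⟩
          refine ⟨(f⁻¹ q.1, f⁻¹ q.2), ⟨⟨h3, ?_, ?_⟩, h4⟩, ?_⟩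
          · simp only [Equiv.Perm.apply_inv_self]; exact h1
          · simp only [Equiv.Perm.apply_inv_self]; exact h2
          · simp only [Equiv.Perm.apply_inv_self]
    rw [step1]
    exact renorm n hn (fun p => p.1 < p.2 ∧ i⁻¹ p.2 < i⁻¹ p.1 ∧ f⁻¹ p.1 < f⁻¹ p.2)
      (fun p => f⁻¹ p.1) (fun p => p.1)
      (by
        rintro p m ⟨h1, h2, h3⟩
        refine ⟨by omega, ?_, ?_⟩
        · simp only; rw [iiS, iiS]; omega
        · simp only; rw [fiS, fiS]; omega)
      (by intro p m; simp only; rw [fiS])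
      (by intro p m; simp only)
  -- (6) SFE ↔ SI2
  have e6 : SFE.ncard = SI2.ncard := by
    have step1 : SFE.ncard
        = {p : ℤ × ℤ | (p.1 < p.2 ∧ i⁻¹ p.2 < i⁻¹ p.1 ∧ f⁻¹ p.2 < f⁻¹ p.1) ∧ blk n (f⁻¹ p.2) = 0}.ncard := by
      apply ncard_bij (fun p => (f p.2, f p.1))
      · intro p hp q hq hpq
        have h1 : f p.2 = f q.2 := congrArg Prod.fst hpq
        have h2 : f p.1 = f q.1 := congrArg Prod.snd hpq
        exact Prod.ext (f.injective h2) (f.injective h1)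
      · ext q
        constructor
        · rintro ⟨p, ⟨⟨h1, h2, h3⟩, h4⟩, rfl⟩
          simp only [Set.mem_setOf_eq, Equiv.Perm.inv_apply_self]
          exact ⟨⟨h2, h3, h1⟩, h4⟩
        · rintro ⟨⟨h1, h2, h3⟩, h4⟩
          refine ⟨(f⁻¹ q.2, f⁻¹ q.1), ⟨⟨h3, ?_, ?_⟩, h4⟩, ?_⟩
          · simp only [Equiv.Perm.apply_inv_self]; exact h1
          · simp only [Equiv.Perm.apply_inv_self]; exact h2
          · simp only [Equiv.Perm.apply_inv_self]
    rw [step1]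
    exact renorm n hn (fun p => p.1 < p.2 ∧ i⁻¹ p.2 < i⁻¹ p.1 ∧ f⁻¹ p.2 < f⁻¹ p.1)
      (fun p => f⁻¹ p.2) (fun p => p.1)
      (by
        rintro p m ⟨h1, h2, h3⟩
        refine ⟨by omega, ?_, ?_⟩
        · simp only; rw [iiS, iiS]; omega
        · simp only; rw [fiS, fiS]; omega)
      (by intro p m; simp only; rw [fiS])
      (by intro p m; simp only)
  -- (7) splits of SD and SF
  have e7 : SD.ncard = SA.ncard + SB.ncard := by
    have hu : SD = SA ∪ SB := by
      ext p
      simp only [hSD, hSA, hSB, Set.mem_setOf_eq, Set.mem_union]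
      constructor
      · rintro ⟨⟨h1, h2⟩, h3⟩
        rcases lt_trichotomy (f p.1) (f p.2) with h | h | h
        · exact Or.inr ⟨⟨h1, h, h2⟩, h3⟩
        · exact absurd (f.injective h) (by omega)
        · exact Or.inl ⟨⟨h1, h, h2⟩, h3⟩
      · rintro (⟨⟨h1, _, h2⟩, h3⟩ | ⟨⟨h1, _, h2⟩, h3⟩) <;> exact ⟨⟨h1, h2⟩, h3⟩
    rw [hu, Set.ncard_union_eq ?_ finSA finSB]
    rw [Set.disjoint_left]
    rintro p ⟨⟨_, h, _⟩, _⟩ ⟨⟨_, h', _⟩, _⟩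
    omega
  have e8 : SF.ncard = SA.ncard + SFE.ncard := by
    have hu : SF = SA ∪ SFE := by
      ext p
      simp only [hSF, hSA, hSFE, Set.mem_setOf_eq, Set.mem_union]
      constructor
      · rintro ⟨⟨h1, h2⟩, h3⟩
        rcases lt_trichotomy (i⁻¹ (f p.1)) (i⁻¹ (f p.2)) with h | h | h
        · exact Or.inr ⟨⟨h1, h2, h⟩, h3⟩
        · exact absurd (i⁻¹.injective h) (fun hh => by have := f.injective hh; omega)
        · exact Or.inl ⟨⟨h1, h2, h⟩, h3⟩
      · rintro (⟨⟨h1, h2, _⟩, h3⟩ | ⟨⟨h1, h2, _⟩, h3⟩) <;> exact ⟨⟨h1, h2⟩, h3⟩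
    rw [hu, Set.ncard_union_eq ?_ finSA finSFE]
    rw [Set.disjoint_left]
    rintro p ⟨⟨_, _, h⟩, _⟩ ⟨⟨_, _, h'⟩, _⟩
    omega
  -- (8) LeR forces SB = ∅
  have hSBempty : SB = ∅ := by
    have : SF.ncard = SI.ncard + SD.ncard := by rw [← e1, ← e2, ← e3]; exact hLeR
    rw [e8, e4, e7, e6, ← e5] at this
    have hz : SB.ncard = 0 := by omega
    exact (Set.ncard_eq_zero finSB).mp hz
  have starB : ∀ x y : ℤ, x < y → f x < f y → i⁻¹ (f y) < i⁻¹ (f x) → False := by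
    intro x y h1 h2 h3
    have hmem : ((x + n * (-(blk n x)), y + n * (-(blk n x))) : ℤ × ℤ) ∈ SB := by
      refine ⟨⟨by omega, ?_, ?_⟩, ?_⟩
      · simp only
        rw [fS, fS]
        omega
      · simp only
        rw [fS, fS, show f y + (n:ℤ) * (-(blk n x)) = f y + n * (-(blk n x)) from rfl]
        rw [iiS, iiS]
        omega
      · simp only
        rw [blk_add n hn]
        omega
    rw [hSBempty] at hmem
    exact hmem
  have star' : ∀ u v : ℤ, u < v → i⁻¹ v < i⁻¹ u → f⁻¹ v < f⁻¹ u := by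
    intro u v h1 h2
    rcases lt_trichotomy (f⁻¹ v) (f⁻¹ u) with h | h | h
    · exact h
    · exact absurd (f⁻¹.injective h) (by omega)
    · exfalso
      apply starB (f⁻¹ u) (f⁻¹ v) h
      · rw [Equiv.Perm.apply_inv_self, Equiv.Perm.apply_inv_self]; exact h1
      · rw [Equiv.Perm.apply_inv_self, Equiv.Perm.apply_inv_self]; exact h2
  have KeyI : ∀ x y : ℤ, x < y → blk n x = 0 → f y < f x → i⁻¹ y < i⁻¹ x → False := by
    intro x y h1 h2 h3 h4
    exact hKey x y h1 h2 h3 (star' x y h1 h4)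
  -- (10) the conjugate
  set T1a : Set (ℤ × ℤ) :=
    {q | (q.1 < q.2 ∧ i⁻¹ q.1 < i⁻¹ q.2 ∧ i⁻¹ (f q.2) < i⁻¹ (f q.1)) ∧ blk n (i⁻¹ q.1) = 0} with hT1a
  set T1b : Set (ℤ × ℤ) :=
    {q | (q.2 < q.1 ∧ i⁻¹ q.1 < i⁻¹ q.2 ∧ i⁻¹ (f q.2) < i⁻¹ (f q.1)) ∧ blk n (i⁻¹ q.1) = 0} with hT1b
  have finT1a : T1a.Finite := by
    apply fin_box _ 1 (5 * n)
    rintro q ⟨⟨h1, h2, h3⟩, h4⟩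
    rw [blk_zero_iff n hn] at h4
    have c1 := hib' q.1; have c2 := hib' q.2
    have c3 := hib' (f q.1); have c4 := hib' (f q.2)
    have b1 := hfb q.1; have b2 := hfb q.2
    refine ⟨by omega, by omega, by omega, by omega⟩
  have finT1b : T1b.Finite := by
    apply fin_box _ 1 (5 * n)
    rintro q ⟨⟨h1, h2, h3⟩, h4⟩
    rw [blk_zero_iff n hn] at h4
    have c1 := hib' q.1; have c2 := hib' q.2
    have c3 := hib' (f q.1); have c4 := hib' (f q.2)
    have b1 := hfb q.1; have b2 := hfb q.2
    refine ⟨by omega, by omega, by omega, by omega⟩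
  have e10 : aLen n (i⁻¹ * f * i) = T1a.ncard + T1b.ncard := by
    unfold aLen
    have hsplit : {p : ℤ × ℤ | 1 ≤ p.1 ∧ p.1 ≤ (n : ℤ) ∧ p.1 < p.2 ∧
        (i⁻¹ * f * i) p.2 < (i⁻¹ * f * i) p.1}.ncard = (T1a ∪ T1b).ncard := by
      apply ncard_bij (fun p => (i p.1, i p.2))
      · intro p hp q hq hpq
        have h1 : i p.1 = i q.1 := congrArg Prod.fst hpq
        have h2 : i p.2 = i q.2 := congrArg Prod.snd hpq
        exact Prod.ext (i.injective h1) (i.injective h2)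
      · ext q
        constructor
        · rintro ⟨p, ⟨h1, h2, h3, h4⟩, rfl⟩
          simp only [Equiv.Perm.mul_apply] at h4
          rcases lt_trichotomy (i p.1) (i p.2) with h | h | h
          · left
            refine ⟨⟨h, ?_, ?_⟩, ?_⟩ <;>
              simp only [Equiv.Perm.inv_apply_self]
            · exact h3
            · exact h4
            · rw [blk_zero_iff n hn]; exact ⟨h1, h2⟩
          · exact absurd (i.injective h) (by omega)
          · right
            refine ⟨⟨h, ?_, ?_⟩, ?_⟩ <;>
              simp only [Equiv.Perm.inv_apply_self]
            · exact h3
            · exact h4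
            · rw [blk_zero_iff n hn]; exact ⟨h1, h2⟩
        · intro hq
          have hmain : i⁻¹ q.1 < i⁻¹ q.2 ∧ i⁻¹ (f q.2) < i⁻¹ (f q.1) ∧ blk n (i⁻¹ q.1) = 0 := by
            rcases hq with ⟨⟨_, h2, h3⟩, h4⟩ | ⟨⟨_, h2, h3⟩, h4⟩ <;> exact ⟨h2, h3, h4⟩
          obtain ⟨h2, h3, h4⟩ := hmain
          rw [blk_zero_iff n hn] at h4
          refine ⟨(i⁻¹ q.1, i⁻¹ q.2), ⟨h4.1, h4.2, h2, ?_⟩, ?_⟩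
          · simp only [Equiv.Perm.mul_apply, Equiv.Perm.apply_inv_self]
            exact h3
          · simp only [Equiv.Perm.apply_inv_self]
    rw [hsplit, Set.ncard_union_eq ?_ finT1a finT1b]
    rw [Set.disjoint_left]
    rintro q ⟨⟨h, _, _⟩, _⟩ ⟨⟨h', _, _⟩, _⟩
    omega
  -- T1a ↔ SA
  have e11 : T1a.ncard = SA.ncard := by
    have step1 : T1a.ncard = {q : ℤ × ℤ |
        (q.1 < q.2 ∧ i⁻¹ q.1 < i⁻¹ q.2 ∧ i⁻¹ (f q.2) < i⁻¹ (f q.1)) ∧ blk n q.1 = 0}.ncard := by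
      exact renorm n hn (fun q => q.1 < q.2 ∧ i⁻¹ q.1 < i⁻¹ q.2 ∧ i⁻¹ (f q.2) < i⁻¹ (f q.1))
        (fun q => i⁻¹ q.1) (fun q => q.1)
        (by
          rintro p m ⟨h1, h2, h3⟩
          refine ⟨by omega, ?_, ?_⟩
          · simp only; rw [iiS, iiS]; omega
          · simp only; rw [fS, fS, iiS, iiS]; omega)
        (by intro p m; simp only; rw [iiS])
        (by intro p m; simp only)
    rw [step1]
    congr 1
    ext q
    simp only [hSA, Set.mem_setOf_eq]
    constructor
    · rintro ⟨⟨h1, h2, h3⟩, h4⟩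
      refine ⟨⟨h1, ?_, h3⟩, h4⟩
      rcases lt_trichotomy (f q.1) (f q.2) with h | h | h
      · exact (starB q.1 q.2 h1 h h3).elim
      · exact absurd (f.injective h) (by omega)
      · exact h
    · rintro ⟨⟨h1, h2, h3⟩, h4⟩
      refine ⟨⟨h1, ?_, h3⟩, h4⟩
      rcases lt_trichotomy (i⁻¹ q.1) (i⁻¹ q.2) with h | h | h
      · exact h
      · exact absurd (i⁻¹.injective h) (by omega)
      · exact (KeyI q.1 q.2 h1 h4 h2 h).elim
  -- T1b ↔ SI2 ↔ SFE
  have e12 : T1b.ncard = SI2.ncard := by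
    have step0 : T1b.ncard = {q : ℤ × ℤ |
        (q.1 < q.2 ∧ i⁻¹ q.2 < i⁻¹ q.1 ∧ i⁻¹ (f q.1) < i⁻¹ (f q.2)) ∧ blk n (i⁻¹ q.2) = 0}.ncard := by
      apply ncard_bij (fun p => (p.2, p.1))
      · intro p hp q hq hpq
        have h1 : p.2 = q.2 := congrArg Prod.fst hpq
        have h2 : p.1 = q.1 := congrArg Prod.snd hpq
        exact Prod.ext h2 h1
      · ext q
        constructor
        · rintro ⟨p, ⟨⟨h1, h2, h3⟩, h4⟩, rfl⟩
          exact ⟨⟨h1, h2, h3⟩, h4⟩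
        · rintro ⟨⟨h1, h2, h3⟩, h4⟩
          exact ⟨(q.2, q.1), ⟨⟨h1, h2, h3⟩, h4⟩, rfl⟩
    rw [step0]
    have step1 : {q : ℤ × ℤ |
        (q.1 < q.2 ∧ i⁻¹ q.2 < i⁻¹ q.1 ∧ i⁻¹ (f q.1) < i⁻¹ (f q.2)) ∧ blk n (i⁻¹ q.2) = 0}.ncard
        = {q : ℤ × ℤ |
        (q.1 < q.2 ∧ i⁻¹ q.2 < i⁻¹ q.1 ∧ i⁻¹ (f q.1) < i⁻¹ (f q.2)) ∧ blk n q.1 = 0}.ncard := by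
      exact renorm n hn (fun q => q.1 < q.2 ∧ i⁻¹ q.2 < i⁻¹ q.1 ∧ i⁻¹ (f q.1) < i⁻¹ (f q.2))
        (fun q => i⁻¹ q.2) (fun q => q.1)
        (by
          rintro p m ⟨h1, h2, h3⟩
          refine ⟨by omega, ?_, ?_⟩
          · simp only; rw [iiS, iiS]; omega
          · simp only; rw [fS, fS, iiS, iiS]; omega)
        (by intro p m; simp only; rw [iiS])
        (by intro p m; simp only)
    rw [step1]
    congr 1
    ext q
    simp only [hSI2, Set.mem_setOf_eq]
    constructor
    · rintro ⟨⟨h1, h2, h3⟩, h4⟩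
      exact ⟨⟨h1, h2, star' q.1 q.2 h1 h2⟩, h4⟩
    · rintro ⟨⟨h1, h2, h3⟩, h4⟩
      refine ⟨⟨h1, h2, ?_⟩, h4⟩
      rcases lt_trichotomy (f q.1) (f q.2) with h | h | h
      · rcases lt_trichotomy (i⁻¹ (f q.1)) (i⁻¹ (f q.2)) with h' | h' | h'
        · exact h'
        · exact absurd (i⁻¹.injective h') (by omega)
        · exact (starB q.1 q.2 h1 h h').elim
      · exact absurd (f.injective h) (by omega)
      · exact (KeyI q.1 q.2 h1 h4 h h2).elim
  rw [e10, e11, e12, ← e6, e1, e8]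


lemma keyA (n : ℕ) (hn : 0 < n) (π : Equiv.Perm (Fin n)) (f : Equiv.Perm ℤ)
    (hfv : ∀ b : Fin n, f ((b.val : ℤ) + 1) =
      if (b.val : ℤ) < ((π b).val : ℤ) then ((π b).val : ℤ) + 1 else ((π b).val : ℤ) + 1 + n)
    (hfA : ∀ a : ℤ, f (a + n) = f a + n)
    (hfb : ∀ a : ℤ, a < f a ∧ f a ≤ a + n)
    (a : ℕ) (hd : DescentAt n π a) (huni : ∀ a' : ℕ, DescentAt n π a' → a' = a)
    (hnofix : ∀ b : Fin n, b.val ≤ a → π b ≠ b) :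
    ∀ x y : ℤ, x < y → blk n x = 0 → f y < f x → f⁻¹ y < f⁻¹ x → False := by
  obtain ⟨ha1, _⟩ := hd
  have fS : ∀ z m : ℤ, f (z + n * m) = f z + n * m := affine_shift n f hfA
  have step' : ∀ (j : ℕ) (hj : j + 1 < n), j ≠ a →
      π ⟨j, Nat.lt_of_succ_lt hj⟩ < π ⟨j + 1, hj⟩ := by
    intro j hj hja
    by_contra hc
    push_neg at hc
    have hne : π ⟨j + 1, hj⟩ ≠ π ⟨j, Nat.lt_of_succ_lt hj⟩ := by
      intro h
      have := π.injective h
      rw [Fin.mk.injEq] at this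
      omega
    exact hja (huni j ⟨hj, lt_of_le_of_ne hc hne⟩)
  have mono : ∀ t : ℕ, ∀ c d : Fin n, c.val + t + 1 = d.val →
      (∀ j : ℕ, c.val ≤ j → j < d.val → j ≠ a) → π c < π d := by
    intro t
    induction t with
    | zero =>
      intro c d hcd hja
      have hj : c.val + 1 < n := by omega
      have h := step' c.val hj (hja c.val le_rfl (by omega))
      have hc : (⟨c.val, Nat.lt_of_succ_lt hj⟩ : Fin n) = c := Fin.eta c _
      have hdd : (⟨c.val + 1, hj⟩ : Fin n) = d := Fin.ext (show c.val + 1 = d.val by omega)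
      rw [hc, hdd] at h
      exact h
    | succ t ih =>
      intro c d hcd hja
      have hd1 : d.val < n := d.isLt
      have h1 : π c < π ⟨c.val + t + 1, by omega⟩ :=
        ih c ⟨c.val + t + 1, by omega⟩ rfl
          (fun j hj1 hj2 => hja j hj1 (by
            have hj2' : j < c.val + t + 1 := hj2
            omega))
      have hj : (c.val + t + 1) + 1 < n := by omega
      have h2 := step' (c.val + t + 1) hj (hja _ (by omega) (by omega))
      have hdd : (⟨c.val + t + 1 + 1, hj⟩ : Fin n) = d := Fin.ext (show c.val + t + 1 + 1 = d.val by omega)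
      rw [hdd] at h2
      exact h1.trans h2
  have exc : ∀ s : ℕ, ∀ b : Fin n, b.val = s → s ≤ a → s < (π b).val := by
    intro s
    induction s with
    | zero =>
      intro b hb hs
      have := hnofix b (by omega)
      have hne : (π b).val ≠ b.val := fun h => this (Fin.ext h)
      omega
    | succ s ih =>
      intro b hb hs
      have hblt : b.val < n := b.isLt
      have hs' : s < n := by omega
      have h1 : s < (π ⟨s, hs'⟩).val := ih ⟨s, hs'⟩ rfl (by omega)
      
      have hj : s + 1 < n := by omega
      have h2 := step' s hj (by omega)
      have hbb : (⟨s + 1, hj⟩ : Fin n) = b := Fin.ext (show s + 1 = b.val by omega)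
      rw [hbb] at h2
      have h3 : (π ⟨s, hs'⟩).val < (π b).val := h2
      omega
  have antiexc : ∀ t : ℕ, ∀ b : Fin n, b.val + t + 1 = n → a < b.val → (π b).val ≤ b.val := by
    intro t
    induction t with
    | zero =>
      intro b hb ha
      have := (π b).isLt
      omega
    | succ t ih =>
      intro b hb ha
      have hj : b.val + 1 < n := by omega
      have h2 := step' b.val hj (by omega)
      have hbb : (⟨b.val, Nat.lt_of_succ_lt hj⟩ : Fin n) = b := Fin.eta b _
      rw [hbb] at h2
      have h3 := ih ⟨b.val + 1, hj⟩ (show b.val + 1 + t + 1 = n by omega)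
        (show a < b.val + 1 by omega)
      have h3' : (π (⟨b.val + 1, hj⟩ : Fin n)).val ≤ b.val + 1 := h3
      have h4 : (π b).val < (π ⟨b.val + 1, hj⟩).val := h2
      omega
  -- f is increasing on the window [1, n]
  have incrA : ∀ z w : ℤ, 1 ≤ z → z < w → w ≤ (n : ℤ) → f z < f w := by
    intro z w h1 h2 h3
    have hz1 : (z - 1).toNat < n := by omega
    have hw1 : (w - 1).toNat < n := by omega
    set bz : Fin n := ⟨(z - 1).toNat, hz1⟩ with hbz
    set bw : Fin n := ⟨(w - 1).toNat, hw1⟩ with hbw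
    have hbzv : (bz.val : ℤ) = z - 1 := by simp [hbz]; omega
    have hbwv : (bw.val : ℤ) = w - 1 := by simp [hbw]; omega
    have ez := hfv bz
    rw [hbzv, show z - 1 + 1 = z from by ring] at ez
    have ew := hfv bw
    rw [hbwv, show w - 1 + 1 = w from by ring] at ew
    have hzw : bz.val < bw.val := by omega
    rcases le_or_gt bz.val a with hza | hza
    · rcases le_or_gt bw.val a with hwa | hwa
      · -- both in the first block
        have hez : z - 1 < ((π bz).val : ℤ) := by
          rw [← hbzv]; exact_mod_cast exc bz.val bz rfl hza
        have hew : w - 1 < ((π bw).val : ℤ) := by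
          rw [← hbwv]; exact_mod_cast exc bw.val bw rfl hwa
        rw [if_pos hez] at ez
        rw [if_pos hew] at ew
        have hm : π bz < π bw :=
          mono (bw.val - bz.val - 1) bz bw (by omega) (fun j j1 j2 => by omega)
        have hm' : (π bz).val < (π bw).val := hm
        have hm'' : ((π bz).val : ℤ) < ((π bw).val : ℤ) := by exact_mod_cast hm'
        omega
      · -- bz in first block, bw in second
        have hez : z - 1 < ((π bz).val : ℤ) := by
          rw [← hbzv]; exact_mod_cast exc bz.val bz rfl hza
        have hew : ((π bw).val : ℤ) ≤ w - 1 := by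
          rw [← hbwv]; exact_mod_cast antiexc (n - bw.val - 1) bw (by omega) hwa
        rw [if_pos hez] at ez
        rw [if_neg (show ¬ (w - 1 < ((π bw).val : ℤ)) by omega)] at ew
        have hlt : (π bz).val < n := (π bz).isLt
        have hlt' : ((π bz).val : ℤ) < (n : ℤ) := by exact_mod_cast hlt
        omega
    · -- both in second block
      have hwa : a < bw.val := by omega
      have hez : ((π bz).val : ℤ) ≤ z - 1 := by
        rw [← hbzv]; exact_mod_cast antiexc (n - bz.val - 1) bz (by omega) hza
      have hew : ((π bw).val : ℤ) ≤ w - 1 := by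
        rw [← hbwv]; exact_mod_cast antiexc (n - bw.val - 1) bw (by omega) hwa
      rw [if_neg (show ¬ (z - 1 < ((π bz).val : ℤ)) by omega)] at ez
      rw [if_neg (show ¬ (w - 1 < ((π bw).val : ℤ)) by omega)] at ew
      have hm : π bz < π bw :=
        mono (bw.val - bz.val - 1) bz bw (by omega) (fun j j1 j2 => by omega)
      have hm' : (π bz).val < (π bw).val := hm
      have hm'' : ((π bz).val : ℤ) < ((π bw).val : ℤ) := by exact_mod_cast hm'
      omega
  -- f is increasing within each block
  have incrA' : ∀ z w : ℤ, blk n z = blk n w → z < w → f z < f w := by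
    intro z w hb hzw
    obtain ⟨s1, s2⟩ := blk_spec n hn z
    obtain ⟨s3, s4⟩ := blk_spec n hn w
    have e1 : f (z + n * (-(blk n z))) = f z + n * (-(blk n z)) := fS z _
    have e2 : f (w + n * (-(blk n z))) = f w + n * (-(blk n z)) := fS w _
    have key := incrA (z + n * (-(blk n z))) (w + n * (-(blk n z)))
      (by linarith [show (n:ℤ) * (-(blk n z)) = -((n:ℤ) * blk n z) from by ring])
      (by omega)
      (by rw [← hb] at s4; linarith [show (n:ℤ) * (-(blk n z)) = -((n:ℤ) * blk n z) from by ring])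
    rw [e1, e2] at key
    omega
  -- inversions of f strictly increase blocks
  have iA : ∀ x y : ℤ, x < y → f y < f x → blk n x < blk n y := by
    intro x y h1 h2
    have h3 := blk_mono n hn (le_of_lt h1)
    rcases lt_or_eq_of_le h3 with h | h
    · exact h
    · exact absurd (incrA' x y h h1) (by omega)
  -- the values of an inversion of f lie in a single block
  have iiA : ∀ x y : ℤ, x < y → f y < f x → blk n (f y) = blk n (f x) := by
    intro x y h1 h2
    set m := blk n x with hm
    have e1 : f (x + n * (-m)) = f x + n * (-m) := fS x _
    have e2 : f (y + n * (-m)) = f y + n * (-m) := fS y _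
    have hbx : blk n (x + n * (-m)) = 0 := by rw [blk_add n hn]; omega
    have hby' : blk n (y + n * (-m)) = blk n y - m := by rw [blk_add n hn]; ring
    -- normalized versions
    have h1' : x + n * (-m) < y + n * (-m) := by omega
    have h2' : f (y + n * (-m)) < f (x + n * (-m)) := by omega
    have hblt : blk n (x + n * (-m)) < blk n (y + n * (-m)) := iA _ _ h1' h2'
    have hyge : (n : ℤ) * 1 + 1 ≤ y + n * (-m) := blk_ge n hn (by omega)
    obtain ⟨u1, u2⟩ := blk_spec n hn (x + n * (-m))
    rw [hbx] at u1 u2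
    have b1 := hfb (x + n * (-m))
    have b2 := hfb (y + n * (-m))
    have hfy1 : blk n (f (y + n * (-m))) = 1 := blk_unique n hn _ 1 (by omega) (by omega)
    have hfx1 : blk n (f (x + n * (-m))) = 1 := blk_unique n hn _ 1 (by omega) (by omega)
    rw [e1] at hfx1
    rw [e2] at hfy1
    have q1 : blk n (f x + n * (-m)) = blk n (f x) - m := by rw [blk_add n hn]; ring
    have q2 : blk n (f y + n * (-m)) = blk n (f y) - m := by rw [blk_add n hn]; ring
    omega
  -- conclude
  intro x y hxy hbx hfi hinv
  have hy : f (f⁻¹ y) = y := f.apply_inv_self y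
  have hx : f (f⁻¹ x) = x := f.apply_inv_self x
  have h1 : blk n x = blk n y := by
    have := iiA (f⁻¹ y) (f⁻¹ x) hinv (by rw [hx, hy]; exact hxy)
    rw [hx, hy] at this
    exact this
  have h2 : blk n x < blk n y := iA x y hxy hfi
  omega


lemma keyB (n k : ℕ) (hn : 0 < n) (π : Equiv.Perm (Fin n)) (f : Equiv.Perm ℤ)
    (hfv : ∀ b : Fin n, f ((b.val : ℤ) + 1) =
      if (b.val : ℤ) < ((π b).val : ℤ) then ((π b).val : ℤ) + 1 else ((π b).val : ℤ) + 1 + n)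
    (hfA : ∀ a : ℤ, f (a + n) = f a + n)
    (hfb : ∀ a : ℤ, a < f a ∧ f a ≤ a + n)
    (hb1 : ∀ c d : Fin n, c.val < k → d.val < k → c < d → π⁻¹ c < π⁻¹ d)
    (hb2 : ∀ c d : Fin n, k ≤ c.val → k ≤ d.val → c < d → π⁻¹ c < π⁻¹ d)
    (hb3 : ∀ b : Fin n, k ≤ (π b).val → π b ≠ b) :
    ∀ x y : ℤ, x < y → blk n x = 0 → f y < f x → f⁻¹ y < f⁻¹ x → False := by
  have fS : ∀ z m : ℤ, f (z + n * m) = f z + n * m := affine_shift n f hfA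
  -- low values sit weakly right of their index
  have B1 : ∀ s : ℕ, ∀ c : Fin n, c.val = s → s < k → s ≤ (π⁻¹ c).val := by
    intro s
    induction s with
    | zero => intro c hc hk; omega
    | succ s ih =>
      intro c hc hk
      have hs' : s < n := by have := c.isLt; omega
      have h1 : s ≤ (π⁻¹ ⟨s, hs'⟩).val := ih ⟨s, hs'⟩ rfl (by omega)
      have h2 : π⁻¹ ⟨s, hs'⟩ < π⁻¹ c := by
        apply hb1 ⟨s, hs'⟩ c (show s < k by omega) (show c.val < k by omega)
        exact (show s < c.val by omega)
      have h2' : (π⁻¹ ⟨s, hs'⟩).val < (π⁻¹ c).val := h2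
      omega
  -- high values sit weakly left of their index
  have B2 : ∀ t : ℕ, ∀ c : Fin n, c.val + t + 1 = n → k ≤ c.val → (π⁻¹ c).val ≤ c.val := by
    intro t
    induction t with
    | zero => intro c hc hk; have := (π⁻¹ c).isLt; omega
    | succ t ih =>
      intro c hc hk
      have hcs : c.val + 1 < n := by omega
      have h1 : (π⁻¹ ⟨c.val + 1, hcs⟩).val ≤ c.val + 1 :=
        ih ⟨c.val + 1, hcs⟩ (show c.val + 1 + t + 1 = n by omega) (show k ≤ c.val + 1 by omega)
      have h2 : π⁻¹ c < π⁻¹ ⟨c.val + 1, hcs⟩ := by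
        apply hb2 c ⟨c.val + 1, hcs⟩ hk (show k ≤ c.val + 1 by omega)
        exact (show c.val < c.val + 1 by omega)
      have h2' : (π⁻¹ c).val < (π⁻¹ ⟨c.val + 1, hcs⟩).val := h2
      omega
  have B2' : ∀ c : Fin n, k ≤ c.val → (π⁻¹ c).val < c.val := by
    intro c hk
    have h1 : (π⁻¹ c).val ≤ c.val := B2 (n - c.val - 1) c (by have := c.isLt; omega) hk
    have h2 : π⁻¹ c ≠ c := by
      intro h
      have h3 := hb3 (π⁻¹ c)
      rw [Equiv.Perm.apply_inv_self] at h3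
      exact h3 hk (by rw [h])
    have h2' : (π⁻¹ c).val ≠ c.val := fun h => h2 (Fin.ext h)
    omega
  -- the two kinds of window positions
  have posfact : ∀ b : Fin n,
      ((π b).val < k ∧ (π b).val ≤ b.val) ∨ (k ≤ (π b).val ∧ b.val < (π b).val) := by
    intro b
    rcases lt_or_ge (π b).val k with h | h
    · left
      refine ⟨h, ?_⟩
      have := B1 (π b).val (π b) rfl h
      rw [Equiv.Perm.inv_apply_self] at this
      exact this
    · right
      refine ⟨h, ?_⟩
      have := B2' (π b) h
      rw [Equiv.Perm.inv_apply_self] at this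
      exact this
  -- window values: low values shifted up, high values kept
  have fvalB : ∀ z : ℤ, 1 ≤ z → z ≤ (n : ℤ) → ∃ b : Fin n, (b.val : ℤ) = z - 1 ∧
      ((f z = ((π b).val : ℤ) + 1 + n ∧ (π b).val < k) ∨
       (f z = ((π b).val : ℤ) + 1 ∧ k ≤ (π b).val)) := by
    intro z h1 h2
    have hz1 : (z - 1).toNat < n := by omega
    refine ⟨⟨(z - 1).toNat, hz1⟩, by simp; omega, ?_⟩
    set b : Fin n := ⟨(z - 1).toNat, hz1⟩ with hb
    have hbv : (b.val : ℤ) = z - 1 := by simp [hb]; omega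
    have ez := hfv b
    rw [hbv, show z - 1 + 1 = z from by ring] at ez
    rcases posfact b with ⟨hlo, hle⟩ | ⟨hhi, hlt⟩
    · left
      have hle' : ((π b).val : ℤ) ≤ z - 1 := by rw [← hbv]; exact_mod_cast hle
      rw [if_neg (show ¬ (z - 1 < ((π b).val : ℤ)) by omega)] at ez
      exact ⟨ez, hlo⟩
    · right
      have hlt' : z - 1 < ((π b).val : ℤ) := by rw [← hbv]; exact_mod_cast hlt
      rw [if_pos hlt'] at ez
      exact ⟨ez, hhi⟩
  -- value bounds on the window
  have WB : ∀ z : ℤ, 1 ≤ z → z ≤ (n : ℤ) →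
      ((k : ℤ) < f z ∧ f z ≤ n) ∨ ((n : ℤ) < f z ∧ f z ≤ n + k) := by
    intro z h1 h2
    obtain ⟨b, hbv, hcase⟩ := fvalB z h1 h2
    have hlt : (π b).val < n := (π b).isLt
    have hlt' : ((π b).val : ℤ) < (n : ℤ) := by exact_mod_cast hlt
    rcases hcase with ⟨he, hk⟩ | ⟨he, hk⟩
    · right
      have hk' : ((π b).val : ℤ) < (k : ℤ) := by exact_mod_cast hk
      have hle' : ((π b).val : ℤ) ≤ z - 1 := by
        have := (posfact b).resolve_right (by omega)
        rw [← hbv]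
        exact_mod_cast this.2
      constructor <;> omega
    · left
      have hk' : (k : ℤ) ≤ ((π b).val : ℤ) := by exact_mod_cast hk
      constructor <;> omega
  -- high (resp. low) window values appear in increasing order
  have incrHigh : ∀ z w : ℤ, 1 ≤ z → z < w → w ≤ (n : ℤ) → f z ≤ n → f w ≤ n → f z < f w := by
    intro z w h1 h2 h3 hfz hfw
    obtain ⟨bz, hbzv, hcz⟩ := fvalB z h1 (by omega)
    obtain ⟨bw, hbwv, hcw⟩ := fvalB w (by omega) h3
    rcases hcz with ⟨he, hk⟩ | ⟨he, hk⟩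
    · exfalso; have := hfb z; omega
    rcases hcw with ⟨he', hk'⟩ | ⟨he', hk'⟩
    · exfalso; have := hfb w; omega
    by_contra hc
    push_neg at hc
    have hne : f w ≠ f z := fun h => by have := f.injective h; omega
    have hlt : ((π bw).val : ℤ) < ((π bz).val : ℤ) := by omega
    have hlt2 : π bw < π bz := by exact_mod_cast (show (π bw).val < (π bz).val by exact_mod_cast hlt)
    have h4 := hb2 (π bw) (π bz) hk' hk hlt2
    rw [Equiv.Perm.inv_apply_self, Equiv.Perm.inv_apply_self] at h4
    have h4' : (bw.val : ℤ) < (bz.val : ℤ) := by exact_mod_cast (show bw.val < bz.val from h4)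
    omega
  have incrLow : ∀ z w : ℤ, 1 ≤ z → z < w → w ≤ (n : ℤ) →
      (n : ℤ) < f z → (n : ℤ) < f w → f z < f w := by
    intro z w h1 h2 h3 hfz hfw
    obtain ⟨bz, hbzv, hcz⟩ := fvalB z h1 (by omega)
    obtain ⟨bw, hbwv, hcw⟩ := fvalB w (by omega) h3
    have hltz : ((π bz).val : ℤ) < (n:ℤ) := by exact_mod_cast (π bz).isLt
    have hltw : ((π bw).val : ℤ) < (n:ℤ) := by exact_mod_cast (π bw).isLt
    rcases hcz with ⟨he, hk⟩ | ⟨he, hk⟩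
    swap
    · exfalso; omega
    rcases hcw with ⟨he', hk'⟩ | ⟨he', hk'⟩
    swap
    · exfalso; omega
    by_contra hc
    push_neg at hc
    have hne : f w ≠ f z := fun h => by have := f.injective h; omega
    have hlt : ((π bw).val : ℤ) < ((π bz).val : ℤ) := by omega
    have hlt2 : π bw < π bz := by exact_mod_cast (show (π bw).val < (π bz).val by exact_mod_cast hlt)
    have h4 := hb1 (π bw) (π bz) hk' hk hlt2
    rw [Equiv.Perm.inv_apply_self, Equiv.Perm.inv_apply_self] at h4
    have h4' : (bw.val : ℤ) < (bz.val : ℤ) := by exact_mod_cast (show bw.val < bz.val from h4)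
    omega
  -- (i'): inversions of f stay within one block
  have iB : ∀ x y : ℤ, x < y → f y < f x → blk n x = blk n y := by
    intro x y h1 h2
    set m := blk n x with hm
    have e1 : f (x + n * (-m)) = f x + n * (-m) := fS x _
    have e2 : f (y + n * (-m)) = f y + n * (-m) := fS y _
    have hbx : blk n (x + n * (-m)) = 0 := by rw [blk_add n hn]; omega
    have hby : blk n (y + n * (-m)) = blk n y - m := by rw [blk_add n hn]; ring
    obtain ⟨u1, u2⟩ := blk_spec n hn (x + n * (-m))
    rw [hbx] at u1 u2
    have hmono := blk_mono n hn (le_of_lt (show x + n * (-m) < y + n * (-m) by omega))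
    rw [hbx] at hmono
    have b1 := hfb (x + n * (-m))
    have b2 := hfb (y + n * (-m))
    have h2' : f (y + n * (-m)) < f (x + n * (-m)) := by omega
    -- if y were in a later block, we get a contradiction
    by_contra hc
    have hge1 : 1 ≤ blk n (y + n * (-m)) := by omega
    have hyge : (n : ℤ) * 1 + 1 ≤ y + n * (-m) := blk_ge n hn (by omega)
    have hyle : y + n * (-m) ≤ 2 * n := by omega
    -- write y' = y'' + n with y'' in the window
    set y'' : ℤ := y + n * (-m) - n with hy''
    have hy2 : 1 ≤ y'' ∧ y'' ≤ n := by constructor <;> omega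
    have e3 : f (y'' + n * 1) = f y'' + n * 1 := fS y'' 1
    have e4 : y'' + n * 1 = y + n * (-m) := by omega
    rw [e4] at e3
    have w1 := WB y'' hy2.1 hy2.2
    have w2 := WB (x + n * (-m)) (by omega) (by omega)
    have hk0 : (0:ℤ) ≤ (k:ℤ) := by positivity
    -- f y'' ≥ k+1 always; f(x') ≤ n + k always (also from bounds)
    have hfx' : f (x + n * (-m)) ≤ n + k := by
      rcases w2 with ⟨a1, a2⟩ | ⟨a1, a2⟩ <;> omega
    have hfy'' : (k : ℤ) < f y'' := by
      rcases w1 with ⟨a1, a2⟩ | ⟨a1, a2⟩ <;> omega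
    omega
  -- (ii') normalized: the values of a window inversion straddle the block boundary
  have iiBnorm : ∀ x y : ℤ, 1 ≤ x → x < y → y ≤ (n : ℤ) → f y < f x →
      blk n (f y) < blk n (f x) := by
    intro x y h1 h2 h3 h4
    have wx := WB x h1 (by omega)
    have wy := WB y (by omega) h3
    have bx := hfb x
    have hy := hfb y
    rcases wx with ⟨a1, a2⟩ | ⟨a1, a2⟩
    · rcases wy with ⟨c1, c2⟩ | ⟨c1, c2⟩
      · exact absurd (incrHigh x y h1 h2 h3 a2 c2) (by omega)
      · omega
    · rcases wy with ⟨c1, c2⟩ | ⟨c1, c2⟩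
      · have hb1' : blk n (f y) = 0 := by rw [blk_zero_iff n hn]; omega
        have hb2' : blk n (f x) = 1 := blk_unique n hn _ 1 (by omega) (by omega)
        omega
      · exact absurd (incrLow x y h1 h2 h3 a1 c1) (by omega)
  -- (ii') general
  have iiB : ∀ x y : ℤ, x < y → f y < f x → blk n (f y) < blk n (f x) := by
    intro x y h1 h2
    set m := blk n x with hm
    have e1 : f (x + n * (-m)) = f x + n * (-m) := fS x _
    have e2 : f (y + n * (-m)) = f y + n * (-m) := fS y _
    have hbx : blk n (x + n * (-m)) = 0 := by rw [blk_add n hn]; omega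
    have hblke : blk n x = blk n y := iB x y h1 h2
    have hby : blk n (y + n * (-m)) = 0 := by rw [blk_add n hn]; omega
    obtain ⟨u1, u2⟩ := blk_spec n hn (x + n * (-m))
    rw [hbx] at u1 u2
    obtain ⟨v1, v2⟩ := blk_spec n hn (y + n * (-m))
    rw [hby] at v1 v2
    have key := iiBnorm (x + n * (-m)) (y + n * (-m)) (by omega) (by omega) (by omega)
      (by omega)
    rw [e1, e2] at key
    have q1 : blk n (f x + n * (-m)) = blk n (f x) - m := by rw [blk_add n hn]; ring
    have q2 : blk n (f y + n * (-m)) = blk n (f y) - m := by rw [blk_add n hn]; ring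
    omega
  -- conclude
  intro x y hxy hbx hfi hinv
  have hyv : f (f⁻¹ y) = y := f.apply_inv_self y
  have hxv : f (f⁻¹ x) = x := f.apply_inv_self x
  have h1 : blk n x = blk n y := iB x y hxy hfi
  have h2 : blk n x < blk n y := by
    have := iiB (f⁻¹ y) (f⁻¹ x) hinv (by rw [hxv, hyv]; exact hxy)
    rw [hxv, hyv] at this
    exact this
  omega


end SchubAux

/-- If `π` indexes an open Schubert variety (unique descent, no fixed points
before it) or an open opposite Schubert variety, then `ℓ(i⁻¹·f·i) = ℓ(f)` for every
`ι ≤_∘ π` of type `(k,n)` with lift `i`. -/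
theorem schubert_conjugate_length_eq
    (n k : ℕ) (π : Equiv.Perm (Fin n)) (f : Equiv.Perm ℤ)
    (hπ : IsType k n π) (hf : IsLift n π f) (hfB : f ∈ Bound k n)
    (hSchub :
      (∃ a : ℕ, DescentAt n π a ∧ (∀ a' : ℕ, DescentAt n π a' → a' = a) ∧
        ∀ b : Fin n, b.val ≤ a → π b ≠ b) ∨
      ((∀ c d : Fin n, c.val < k → d.val < k → c < d → π⁻¹ c < π⁻¹ d) ∧
       (∀ c d : Fin n, k ≤ c.val → k ≤ d.val → c < d → π⁻¹ c < π⁻¹ d) ∧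
       (∀ b : Fin n, k ≤ (π b).val → π b ≠ b))) :
    ∀ (ι : Equiv.Perm (Fin n)) (i : Equiv.Perm ℤ),
      IsType k n ι → IsLift n ι i → i ∈ Bound k n → LeR n i f →
      aLen n (i⁻¹ * f * i) = aLen n f := by
  intro ι i hι hlifti hiB hLeR
  rcases Nat.eq_zero_or_pos n with hn0 | hn
  · exfalso
    obtain ⟨h1, h2⟩ := hfB.2.1 0
    rw [hn0] at h2
    norm_num at h2
    exact absurd h1 (not_lt.mpr h2)
  · obtain ⟨hfA, hfb, -⟩ := hfB
    obtain ⟨hiA, hib, -⟩ := hiB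
    apply SchubAux.main_count n hn f i hfA hiA hfb hib hLeR
    rcases hSchub with ⟨a, hd, huni, hnofix⟩ | ⟨hb1, hb2, hb3⟩
    · exact SchubAux.keyA n hn π f hf.2 hfA hfb a hd huni hnofix
    · exact SchubAux.keyB n k hn π f hf.2 hfA hfb hb1 hb2 hb3
end
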